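/- Let (X,d) be a compact metric space with more than one point, let f : X → X be a surjective continuous map with the specification property, and assume f(p) = p for some p ∈ X. Then there exist ε > 0 and a dense Mycielski set D ⊆ X which is distributionally ε-scrambled for f, satisfies f(D) ⊆ D, and satisfies p ∈ D ⊆ (Tran(f) ∩ Rec(f)) ∪ {p}. -/

import Mathlib

open Filter Set Topology

noncomputable section
open scoped Classical
set_option linter.unusedSectionVars false
set_option linter.unusedVariables false
set_option maxHeartbeats 1000000
/-- Fraction of times `0 ≤ i < n` at which the orbits of `x` and `y` are `t`-close,
i.e. `Φ⁽ⁿ⁾_{xy}(t)`. -/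
def distCount {X : Type*} [MetricSpace X] (f : X → X) (x y : X) (t : ℝ) (n : ℕ) : ℝ :=
  (((Finset.range n).filter fun i => dist (f^[i] x) (f^[i] y) < t).card : ℝ) / n

/-- `Φ_{xy}(t)`, the lower distribution function. -/
def PhiLow {X : Type*} [MetricSpace X] (f : X → X) (x y : X) (t : ℝ) : ℝ :=
  liminf (fun n => distCount f x y t n) atTop

/-- `Φ*_{xy}(t)`, the upper distribution function. -/
def PhiUp {X : Type*} [MetricSpace X] (f : X → X) (x y : X) (t : ℝ) : ℝ :=
  limsup (fun n => distCount f x y t n) atTop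

/-- The ω-limit set of `x`: the set of accumulation points of the forward orbit. -/
def omegaSet {X : Type*} [MetricSpace X] (f : X → X) (x : X) : Set X :=
  {y | ∃ φ : ℕ → ℕ, StrictMono φ ∧ Tendsto (fun n => f^[φ n] x) atTop (nhds y)}

/-- Points with dense forward orbit. -/
def Tran {X : Type*} [MetricSpace X] (f : X → X) : Set X :=
  {x | Dense (Set.range fun n : ℕ => f^[n] x)}

/-- Recurrent points. -/
def Rec {X : Type*} [MetricSpace X] (f : X → X) : Set X :=
  {x | x ∈ omegaSet f x}

/-- A Cantor set: nonempty, compact, perfect and totally disconnected. -/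
def IsCantorSet {X : Type*} [MetricSpace X] (C : Set X) : Prop :=
  C.Nonempty ∧ IsCompact C ∧ Perfect C ∧ IsTotallyDisconnected C

/-- A Mycielski set: a countable union of Cantor sets. -/
def IsMycielski {X : Type*} [MetricSpace X] (M : Set X) : Prop :=
  ∃ C : ℕ → Set X, (∀ k, IsCantorSet (C k)) ∧ M = ⋃ k, C k

/-- `S` is distributionally `ε`-scrambled for `f`. -/
def DistScrambled {X : Type*} [MetricSpace X] (f : X → X) (S : Set X) (ε : ℝ) : Prop :=
  ∀ x ∈ S, ∀ y ∈ S, x ≠ y →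
    (∀ t : ℝ, 0 < t → PhiUp f x y t = 1) ∧ PhiLow f x y ε = 0

/-- The specification property of Bowen. -/
def SpecProp {X : Type*} [MetricSpace X] (f : X → X) : Prop :=
  ∀ ε : ℝ, 0 < ε → ∃ N : ℕ, 0 < N ∧
    ∀ (s : ℕ) (hs : 2 ≤ s), ∀ (y : Fin s → X) (j k : Fin s → ℕ),
      j ⟨0, by omega⟩ = 0 →
      (∀ m, j m ≤ k m) →
      (∀ m : Fin s, ∀ h : (m : ℕ) + 1 < s, k m + N ≤ j ⟨(m : ℕ) + 1, h⟩) →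
      ∃ x : X, ∀ m : Fin s, ∀ i : ℕ, j m ≤ i → i ≤ k m →
        dist (f^[i] x) (f^[i] (y m)) < ε

namespace SpecWork










lemma card_filter_far {n lo hi : ℕ} (P : ℕ → Prop) [DecidablePred P] (hhi : hi ≤ n)
    (h : ∀ j, lo ≤ j → j < hi → ¬ P j) :
    ((Finset.range n).filter P).card ≤ n - (hi - lo) := by
  have hsub : (Finset.range n).filter P ⊆ Finset.range n \ Finset.Ico lo hi := by
    intro j hj
    simp only [Finset.mem_filter, Finset.mem_range] at hj
    simp only [Finset.mem_sdiff, Finset.mem_range, Finset.mem_Ico, not_and, not_lt]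
    exact ⟨hj.1, fun hlo => by
      by_contra hcon
      exact h j hlo (by omega) hj.2⟩
  calc ((Finset.range n).filter P).card ≤ (Finset.range n \ Finset.Ico lo hi).card :=
        Finset.card_le_card hsub
    _ = n - (hi - lo) := by
        rw [Finset.card_sdiff_of_subset (by
          intro j hj
          simp only [Finset.mem_Ico] at hj
          simp only [Finset.mem_range]
          omega)]
        simp [Nat.card_Ico]

lemma card_filter_close {n lo hi : ℕ} (P : ℕ → Prop) [DecidablePred P] (hhi : hi ≤ n)
    (h : ∀ j, lo ≤ j → j < hi → P j) :
    hi - lo ≤ ((Finset.range n).filter P).card := by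
  have hsub : Finset.Ico lo hi ⊆ (Finset.range n).filter P := by
    intro j hj
    simp only [Finset.mem_Ico] at hj
    simp only [Finset.mem_filter, Finset.mem_range]
    exact ⟨by omega, h j hj.1 hj.2⟩
  calc hi - lo = (Finset.Ico lo hi).card := by simp [Nat.card_Ico]
    _ ≤ _ := Finset.card_le_card hsub

variable {X : Type*} [MetricSpace X]

lemma distCount_nonneg (f : X → X) (x y : X) (t : ℝ) (n : ℕ) : 0 ≤ distCount f x y t n := by
  unfold distCount; positivity

lemma distCount_le_one (f : X → X) (x y : X) (t : ℝ) (n : ℕ) : distCount f x y t n ≤ 1 := by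
  unfold distCount
  rcases Nat.eq_zero_or_pos n with h | h
  · simp [h]
  · rw [div_le_one (by exact_mod_cast h)]
    exact_mod_cast (Finset.card_filter_le _ _).trans_eq (by simp)

lemma distCount_symm (f : X → X) (x y : X) (t : ℝ) (n : ℕ) :
    distCount f x y t n = distCount f y x t n := by
  unfold distCount
  rw [show (Finset.filter (fun i => dist (f^[i] x) (f^[i] y) < t) (Finset.range n))
      = (Finset.filter (fun i => dist (f^[i] y) (f^[i] x) < t) (Finset.range n)) from
    Finset.filter_congr (fun i _ => by simp [dist_comm])]

lemma distCount_le_of_far (f : X → X) (x y : X) (t : ℝ) {n lo hi : ℕ}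
    (hhi : hi ≤ n) (hn : 0 < n)
    (h : ∀ j, lo ≤ j → j < hi → ¬ dist (f^[j] x) (f^[j] y) < t) :
    distCount f x y t n ≤ ((n - (hi - lo) : ℕ) : ℝ) / n := by
  unfold distCount
  gcongr
  exact_mod_cast card_filter_far _ hhi h

lemma distCount_ge_of_close (f : X → X) (x y : X) (t : ℝ) {n lo hi : ℕ}
    (hhi : hi ≤ n) (hn : 0 < n)
    (h : ∀ j, lo ≤ j → j < hi → dist (f^[j] x) (f^[j] y) < t) :
    ((hi - lo : ℕ) : ℝ) / n ≤ distCount f x y t n := by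
  unfold distCount
  gcongr
  exact_mod_cast card_filter_close _ hhi h

/- ## limsup / liminf helpers -/

lemma phiUp_eq_one {f : X → X} {x y : X} {t : ℝ}
    (h : ∀ δ : ℝ, 0 < δ → ∀ m : ℕ, ∃ n, m ≤ n ∧ 1 - δ ≤ distCount f x y t n) :
    PhiUp f x y t = 1 := by
  have hb : IsBoundedUnder (· ≤ ·) atTop (fun n => distCount f x y t n) :=
    isBoundedUnder_of ⟨1, fun n => distCount_le_one f x y t n⟩
  have hb' : IsBoundedUnder (· ≥ ·) atTop (fun n => distCount f x y t n) :=
    isBoundedUnder_of ⟨0, fun n => distCount_nonneg f x y t n⟩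
  refine le_antisymm ?_ ?_
  · exact limsup_le_of_le hb'.isCoboundedUnder_le
      (Eventually.of_forall fun n => distCount_le_one f x y t n)
  · by_contra hcon
    push_neg at hcon
    have hδ : 0 < (1 - PhiUp f x y t) / 2 := by linarith
    have := le_limsup_of_frequently_le (f := atTop)
      (u := fun n => distCount f x y t n) (a := 1 - (1 - PhiUp f x y t) / 2)
      (frequently_atTop.2 fun m => by
        obtain ⟨n, hn, hd⟩ := h _ hδ m
        exact ⟨n, hn, hd⟩) hb
    unfold PhiUp at *
    linarith

lemma phiLow_eq_zero {f : X → X} {x y : X} {t : ℝ}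
    (h : ∀ δ : ℝ, 0 < δ → ∀ m : ℕ, ∃ n, m ≤ n ∧ distCount f x y t n ≤ δ) :
    PhiLow f x y t = 0 := by
  have hb : IsBoundedUnder (· ≤ ·) atTop (fun n => distCount f x y t n) :=
    isBoundedUnder_of ⟨1, fun n => distCount_le_one f x y t n⟩
  have hb' : IsBoundedUnder (· ≥ ·) atTop (fun n => distCount f x y t n) :=
    isBoundedUnder_of ⟨0, fun n => distCount_nonneg f x y t n⟩
  refine le_antisymm ?_ ?_
  · by_contra hcon
    push_neg at hcon
    have hδ : 0 < PhiLow f x y t / 2 := by linarith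
    have := liminf_le_of_frequently_le (f := atTop)
      (u := fun n => distCount f x y t n) (a := PhiLow f x y t / 2)
      (frequently_atTop.2 fun m => by
        obtain ⟨n, hn, hd⟩ := h _ hδ m
        exact ⟨n, hn, hd⟩) hb'
    unfold PhiLow at *
    linarith
  · exact le_liminf_of_le hb.isCoboundedUnder_ge
      (Eventually.of_forall fun n => distCount_nonneg f x y t n)





variable {X : Type*} [MetricSpace X] [CompactSpace X] {f : X → X}

lemma iter_mem_of_fwd {K : Set X} (HK : ∀ y ∈ K, f y ∈ K) :
    ∀ n, ∀ y ∈ K, f^[n] y ∈ K := by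
  intro n
  induction n with
  | zero => intro y hy; simpa using hy
  | succ n ih =>
      intro y hy
      rw [Function.iterate_succ_apply']
      exact HK _ (ih y hy)

lemma unif_mod (hf : Continuous f) (T : ℕ) {D : ℝ} (hD : 0 < D) :
    ∃ ζ : ℝ, 0 < ζ ∧ ∀ a b : X, dist a b ≤ ζ → ∀ t ≤ T, dist (f^[t] a) (f^[t] b) < D := by
  induction T with
  | zero =>
      refine ⟨D / 2, by positivity, fun a b hab t ht => ?_⟩
      have : t = 0 := by omega
      subst this
      simpa using lt_of_le_of_lt hab (by linarith)
  | succ T ih =>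
      obtain ⟨ζ, hζ, hζp⟩ := ih
      have huc : UniformContinuous (f^[T + 1]) :=
        CompactSpace.uniformContinuous_of_continuous (hf.iterate _)
      rw [Metric.uniformContinuous_iff] at huc
      obtain ⟨δ, hδ, hδp⟩ := huc D hD
      refine ⟨min ζ (δ / 2), by positivity, fun a b hab t ht => ?_⟩
      rcases Nat.lt_or_ge t (T + 1) with h | h
      · exact hζp a b (hab.trans (min_le_left _ _)) t (by omega)
      · have : t = T + 1 := by omega
        subst this
        exact hδp (lt_of_le_of_lt (hab.trans (min_le_right _ _)) (by linarith))

lemma spec_windows (hspec : SpecProp f) (p : X) {γ : ℝ} (hγ : 0 < γ) :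
    ∃ N : ℕ, 0 < N ∧ ∀ (L : ℕ) (a b : ℕ → ℕ) (v : ℕ → X),
      a 0 = 0 → (∀ i, i < L → a i ≤ b i) → (∀ i, i + 1 < L → b i + N ≤ a (i + 1)) →
      ∃ x : X, ∀ i, i < L → ∀ j, a i ≤ j → j ≤ b i → dist (f^[j] x) (f^[j] (v i)) < γ := by
  obtain ⟨N, hN, hS⟩ := hspec γ hγ
  refine ⟨N, hN, fun L a b v ha0 hab hgap => ?_⟩
  match L with
  | 0 => exact ⟨p, fun i hi => by omega⟩
  | 1 =>
      have h2 : (2:ℕ) ≤ 2 := le_refl 2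
      obtain ⟨x, hx⟩ := hS 2 h2
        (fun m => if (m : ℕ) = 0 then v 0 else p)
        (fun m => if (m : ℕ) = 0 then a 0 else b 0 + N)
        (fun m => if (m : ℕ) = 0 then b 0 else b 0 + N)
        (by simp [ha0])
        (fun m => by
          by_cases h : (m : ℕ) = 0
          · simp [h]; exact hab 0 (by omega)
          · simp [h])
        (fun m h => by
          have hm : (m : ℕ) = 0 := by omega
          simp [hm])
      refine ⟨x, fun i hi j hji hjb => ?_⟩
      have hi0 : i = 0 := by omega
      subst hi0
      have := hx ⟨0, by omega⟩ j (by simpa using hji) (by simpa using hjb)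
      simpa using this
  | (L + 2) =>
      obtain ⟨x, hx⟩ := hS (L + 2) (by omega)
        (fun m => v m) (fun m => a m) (fun m => b m)
        (by simpa using ha0)
        (fun m => hab m m.isLt)
        (fun m h => hgap m h)
      exact ⟨x, fun i hi j hji hjb => hx ⟨i, hi⟩ j hji hjb⟩

/-- One full orbit-shadowing point for an infinite family of windows, by compactness. -/
lemma exists_shadow_all (hf : Continuous f) (p : X) {γ : ℝ} (hγ : 0 < γ) {N : ℕ}
    (hwin : ∀ (L : ℕ) (a b : ℕ → ℕ) (v : ℕ → X),
      a 0 = 0 → (∀ i, i < L → a i ≤ b i) → (∀ i, i + 1 < L → b i + N ≤ a (i + 1)) →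
      ∃ x : X, ∀ i, i < L → ∀ j, a i ≤ j → j ≤ b i → dist (f^[j] x) (f^[j] (v i)) < γ)
    (a b : ℕ → ℕ) (v : ℕ → X)
    (ha0 : a 0 = 0) (hab : ∀ i, a i ≤ b i) (hgap : ∀ i, b i + N ≤ a (i + 1)) :
    ∃ z : X, ∀ i j, a i ≤ j → j ≤ b i → dist (f^[j] z) (f^[j] (v i)) ≤ γ := by
  set F : ℕ → Set X := fun s =>
    {x | ∀ i, i ≤ s → ∀ j, a i ≤ j → j ≤ b i → dist (f^[j] x) (f^[j] (v i)) ≤ γ} with hF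
  have hclosed : ∀ s, IsClosed (F s) := by
    intro s
    have : F s = ⋂ (i : ℕ) (_ : i ≤ s) (j : ℕ) (_ : a i ≤ j) (_ : j ≤ b i),
        {x | dist (f^[j] x) (f^[j] (v i)) ≤ γ} := by
      ext x
      simp [hF]
    rw [this]
    refine isClosed_iInter fun i => isClosed_iInter fun _ => isClosed_iInter fun j =>
      isClosed_iInter fun _ => isClosed_iInter fun _ => ?_
    exact isClosed_le ((hf.iterate j).dist continuous_const) continuous_const
  have hne : ∀ s, (F s).Nonempty := by
    intro s
    obtain ⟨x, hx⟩ := hwin (s + 1) a b v ha0 (fun i _ => hab i) (fun i _ => hgap i)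
    exact ⟨x, fun i hi j hji hjb => (hx i (by omega) j hji hjb).le⟩
  have hsub : ∀ s, F (s + 1) ⊆ F s := by
    intro s x hx i hi j hji hjb
    exact hx i (by omega) j hji hjb
  have hint : (⋂ s, F s).Nonempty :=
    IsCompact.nonempty_iInter_of_sequence_nonempty_isCompact_isClosed F hsub hne
      ((hclosed 0).isCompact) hclosed
  obtain ⟨z, hz⟩ := hint
  refine ⟨z, fun i j hji hjb => ?_⟩
  exact (mem_iInter.1 hz i) i (le_refl i) j hji hjb



variable {X : Type*} [MetricSpace X] [CompactSpace X] {f : X → X}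

/-- ω-limit set as intersection of orbit-tail closures. -/
def OmSet (f : X → X) (z : X) : Set X :=
  ⋂ n : ℕ, closure {y | ∃ m, n ≤ m ∧ y = f^[m] z}

lemma omSet_nonempty (f : X → X) (z : X) : (OmSet f z).Nonempty := by
  apply IsCompact.nonempty_iInter_of_sequence_nonempty_isCompact_isClosed
  · intro n
    exact closure_mono (fun y hy => by
      obtain ⟨m, hm, rfl⟩ := hy
      exact ⟨m, by omega, rfl⟩)
  · intro n
    exact ⟨f^[n] z, subset_closure ⟨n, le_refl n, rfl⟩⟩
  · exact isClosed_closure.isCompact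
  · intro n
    exact isClosed_closure

lemma omSet_approx {z y : X} (hy : y ∈ OmSet f z) (n : ℕ) {ε : ℝ} (hε : 0 < ε) :
    ∃ m, n ≤ m ∧ dist (f^[m] z) y < ε := by
  have := mem_iInter.1 hy n
  rw [Metric.mem_closure_iff] at this
  obtain ⟨w, ⟨m, hm, rfl⟩, hw⟩ := this ε hε
  exact ⟨m, hm, by rwa [dist_comm]⟩

lemma omSet_fwd (hf : Continuous f) {z y : X} (hy : y ∈ OmSet f z) : f y ∈ OmSet f z := by
  rw [OmSet, mem_iInter]
  intro n
  rw [Metric.mem_closure_iff]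
  intro ε hε
  obtain ⟨δ, hδ, hδp⟩ := Metric.continuous_iff.1 hf y ε hε
  obtain ⟨m, hm, hmd⟩ := omSet_approx hy n hδ
  refine ⟨f^[m + 1] z, ⟨m + 1, by omega, rfl⟩, ?_⟩
  rw [Function.iterate_succ_apply']
  rw [dist_comm]
  exact hδp _ hmd

lemma omSet_iter_fwd (hf : Continuous f) {z y : X} (hy : y ∈ OmSet f z) (n : ℕ) :
    f^[n] y ∈ OmSet f z := by
  induction n with
  | zero => simpa using hy
  | succ n ih => rw [Function.iterate_succ_apply']; exact omSet_fwd hf ih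

/-- The key self-distance lemma: a point whose whole forward orbit is `ζ₂`-far from its
`c`-shift, built by shadowing an anti-aligned pattern of blocks at `p` and in `K`. -/
lemma exists_selflag (hf : Continuous f) (hsurj : Function.Surjective f)
    {p : X} (hp : f p = p)
    {K : Set X} (HK : ∀ y ∈ K, f y ∈ K) {k₀ : X} (hk₀ : k₀ ∈ K)
    {γ₁ D ζ₂ : ℝ} (hγ₁ : 0 < γ₁)
    (Hsep : ∀ y ∈ K, D ≤ dist p y)
    {N' : ℕ} (hN' : 0 < N')
    (hwin : ∀ (L : ℕ) (a b : ℕ → ℕ) (v : ℕ → X),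
      a 0 = 0 → (∀ i, i < L → a i ≤ b i) → (∀ i, i + 1 < L → b i + N' ≤ a (i + 1)) →
      ∃ x : X, ∀ i, i < L → ∀ j, a i ≤ j → j ≤ b i → dist (f^[j] x) (f^[j] (v i)) < γ₁)
    (Hmod : ∀ a b : X, dist a b ≤ ζ₂ → ∀ t ≤ N', dist (f^[t] a) (f^[t] b) < D - 2 * γ₁)
    {c : ℕ} (hc : N' + 1 ≤ c) :
    ∃ z : X, ∀ j : ℕ, ζ₂ < dist (f^[j] z) (f^[j + c] z) := by
  classical
  -- windows
  set a : ℕ → ℕ := fun i => i * c with ha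
  set b : ℕ → ℕ := fun i => i * c + (c - N' - 1) with hb
  set v : ℕ → X := fun i =>
    if Even i then p else Classical.choose ((hsurj.iterate (i * c)) k₀) with hv
  have hvK : ∀ i, ¬ Even i → f^[i * c] (v i) = k₀ := by
    intro i hi
    simp only [hv, if_neg hi]
    exact Classical.choose_spec ((hsurj.iterate (i * c)) k₀)
  obtain ⟨z, hz⟩ := exists_shadow_all (N := N') hf p hγ₁ hwin a b v
    (by simp [ha]) (fun i => by simp [ha, hb]) (fun i => by
      have h1 : (i + 1) * c = i * c + c := by ring
      simp only [ha, hb, h1]; omega)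
  -- pin facts
  have pinP : ∀ i j, Even i → a i ≤ j → j ≤ b i → dist (f^[j] z) p ≤ γ₁ := by
    intro i j hi hji hjb
    have h2 := hz i j hji hjb
    simp only [hv, if_pos hi] at h2
    rwa [Function.iterate_fixed hp] at h2
  have pinK : ∀ i j, ¬ Even i → a i ≤ j → j ≤ b i → ∃ y ∈ K, dist (f^[j] z) y ≤ γ₁ := by
    intro i j hi hji hjb
    refine ⟨f^[j] (v i), ?_, hz i j hji hjb⟩
    have : f^[j] (v i) = f^[j - i * c] (f^[i * c] (v i)) := by
      rw [← Function.iterate_add_apply]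
      congr 1
      simp only [ha] at hji
      omega
    rw [this, hvK i hi]
    exact iter_mem_of_fwd HK _ _ hk₀
  refine ⟨z, fun j => ?_⟩
  by_contra hcon
  push_neg at hcon
  -- phase analysis
  have h2c : 0 < 2 * c := by omega
  set q := j / (2 * c) with hq
  set r := j % (2 * c) with hr
  have hjqr : j = 2 * c * q + r := by rw [hq, hr]; exact (Nat.div_add_mod j (2 * c)).symm
  have hrlt : r < 2 * c := Nat.mod_lt _ h2c
  have key : ∃ t ≤ N', ∃ i₁ i₂ : ℕ,
      ((Even i₁ ∧ ¬ Even i₂) ∨ (¬ Even i₁ ∧ Even i₂)) ∧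
      a i₁ ≤ j + t ∧ j + t ≤ b i₁ ∧ a i₂ ≤ j + t + c ∧ j + t + c ≤ b i₂ := by
    have e1 : 2 * q * c = 2 * (q * c) := by ring
    have e2 : (2 * q + 1) * c = 2 * (q * c) + c := by ring
    have e3 : (2 * q + 2) * c = 2 * (q * c) + 2 * c := by ring
    have e4 : (2 * q + 3) * c = 2 * (q * c) + 3 * c := by ring
    have hm : j = 2 * (q * c) + r := by rw [hjqr]; ring
    have e2q : Even (2 * q) := ⟨q, by ring⟩
    have e2q1 : ¬ Even (2 * q + 1) := by rw [Nat.even_iff]; omega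
    have e2q2 : Even (2 * q + 2) := ⟨q + 1, by ring⟩
    have e2q3 : ¬ Even (2 * q + 3) := by rw [Nat.even_iff]; omega
    rcases Nat.lt_or_ge r (c - N') with h1 | h1
    · exact ⟨0, by omega, 2 * q, 2 * q + 1, Or.inl ⟨e2q, e2q1⟩,
        by simp only [ha, hb, e1, e2]; omega, by simp only [ha, hb, e1, e2]; omega,
        by simp only [ha, hb, e1, e2]; omega, by simp only [ha, hb, e1, e2]; omega⟩
    · rcases Nat.lt_or_ge r c with h2 | h2
      · exact ⟨c - r, by omega, 2 * q + 1, 2 * q + 2, Or.inr ⟨e2q1, e2q2⟩,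
          by simp only [ha, hb, e2, e3]; omega, by simp only [ha, hb, e2, e3]; omega,
          by simp only [ha, hb, e2, e3]; omega, by simp only [ha, hb, e2, e3]; omega⟩
      · rcases Nat.lt_or_ge r (2 * c - N') with h3 | h3
        · exact ⟨0, by omega, 2 * q + 1, 2 * q + 2, Or.inr ⟨e2q1, e2q2⟩,
            by simp only [ha, hb, e2, e3]; omega, by simp only [ha, hb, e2, e3]; omega,
            by simp only [ha, hb, e2, e3]; omega, by simp only [ha, hb, e2, e3]; omega⟩
        · exact ⟨2 * c - r, by omega, 2 * q + 2, 2 * q + 3, Or.inl ⟨e2q2, e2q3⟩,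
            by simp only [ha, hb, e3, e4]; omega, by simp only [ha, hb, e3, e4]; omega,
            by simp only [ha, hb, e3, e4]; omega, by simp only [ha, hb, e3, e4]; omega⟩
  obtain ⟨t, ht, i₁, i₂, hpar, h₁, h₂, h₃, h₄⟩ := key
  have hmod := Hmod _ _ hcon t ht
  rw [← Function.iterate_add_apply, ← Function.iterate_add_apply] at hmod
  have e1 : t + j = j + t := by ring
  have e2 : t + (j + c) = j + t + c := by ring
  rw [e1, e2] at hmod
  rcases hpar with ⟨hE1, hE2⟩ | ⟨hE1, hE2⟩
  · have d1 := pinP i₁ (j + t) hE1 h₁ h₂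
    obtain ⟨y, hyK, d2⟩ := pinK i₂ (j + t + c) hE2 h₃ h₄
    have := Hsep y hyK
    have htri : D ≤ dist p y := this
    have : dist p y ≤ dist p (f^[j + t] z) + dist (f^[j + t] z) (f^[j + t + c] z)
        + dist (f^[j + t + c] z) y := dist_triangle4 _ _ _ _
    rw [dist_comm p (f^[j+t] z)] at this
    linarith
  · obtain ⟨y, hyK, d1⟩ := pinK i₁ (j + t) hE1 h₁ h₂
    have d2 := pinP i₂ (j + t + c) hE2 h₃ h₄
    have htri : D ≤ dist p y := Hsep y hyK
    have : dist p y ≤ dist p (f^[j + t + c] z) + dist (f^[j + t + c] z) (f^[j + t] z)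
        + dist (f^[j + t] z) y := dist_triangle4 _ _ _ _
    rw [dist_comm p (f^[j+t+c] z), dist_comm (f^[j+t+c] z) (f^[j+t] z)] at this
    linarith




/-! ### Era bookkeeping -/

/-- Kind of era `e`: `0` tracking, `1` fixed-point era, `2` bit era, `3` lag era. -/
def eKind (e : ℕ) : ℕ := (Nat.unpair e).2 % 4

/-- Parameter of era `e`. -/
def ePar (e : ℕ) : ℕ := (Nat.unpair e).1

lemma exists_era (u r m : ℕ) (hr : r < 4) : ∃ e, m ≤ e ∧ eKind e = r ∧ ePar e = u := by
  refine ⟨Nat.pair u (4 * m + r), ?_, ?_, ?_⟩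
  · exact le_trans (by omega) (Nat.right_le_pair _ _)
  · simp only [eKind, Nat.unpair_pair]
    omega
  · simp only [ePar, Nat.unpair_pair]

lemma ePar_le (e : ℕ) : ePar e ≤ e := Nat.unpair_left_le e

/-- Effective bit of `α` used in bit-era with parameter `u`. -/
def ebit (α : ℕ → Bool) (u : ℕ) : Bool :=
  if u % 4 = 1 then true else if u % 2 = 0 then α (u / 2) else false

lemma ebit_depends (α β : ℕ → Bool) (u : ℕ) (h : α (u / 2) = β (u / 2)) :
    ebit α u = ebit β u := by
  unfold ebit
  split_ifs <;> simp [h]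

/-- Start of era `e`; `g e` is the gap inserted before era `e`. -/
def eraA (g : ℕ → ℕ) : ℕ → ℕ
  | 0 => 0
  | e + 1 => (eraA g e + (e + 1) * (eraA g e + e + 1)) + g (e + 1)

/-- End of era `e`. -/
def eraB (g : ℕ → ℕ) (e : ℕ) : ℕ := eraA g e + (e + 1) * (eraA g e + e + 1)

lemma eraA_succ (g : ℕ → ℕ) (e : ℕ) : eraA g (e + 1) = eraB g e + g (e + 1) := rfl

lemma eraA_le_eraB (g : ℕ → ℕ) (e : ℕ) : eraA g e ≤ eraB g e := by
  unfold eraB; omega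

lemma eraB_dominate (g : ℕ → ℕ) (e : ℕ) :
    (e + 1) * eraA g e + (e + 1) ≤ eraB g e := by
  unfold eraB
  have h1 : (e + 1) * (eraA g e + e + 1) = (e + 1) * eraA g e + (e + 1) * (e + 1) := by ring
  have h2 : (e + 1) ≤ (e + 1) * (e + 1) := Nat.le_mul_of_pos_left _ (by omega)
  omega

lemma eraB_lt_eraA_succ (g : ℕ → ℕ) (e : ℕ) (hg : 0 < g (e + 1)) :
    eraB g e < eraA g (e + 1) := by
  rw [eraA_succ]; omega

lemma eraA_lt_eraB (g : ℕ → ℕ) (e : ℕ) : eraA g e < eraB g e := by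
  unfold eraB
  have : 1 ≤ (e + 1) * (eraA g e + e + 1) := Nat.one_le_iff_ne_zero.2 (by positivity)
  omega

lemma eraA_mono_succ (g : ℕ → ℕ) (e : ℕ) : eraA g e < eraA g (e + 1) := by
  rw [eraA_succ]
  exact lt_of_lt_of_le (eraA_lt_eraB g e) (by omega)

lemma le_eraA (g : ℕ → ℕ) (e : ℕ) : e ≤ eraA g e := by
  induction e with
  | zero => simp [eraA]
  | succ e ih => have := eraA_mono_succ g e; omega

lemma eraB_mono (g : ℕ → ℕ) {e e' : ℕ} (h : e ≤ e') : eraB g e ≤ eraB g e' := by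
  induction e' with
  | zero => simp_all
  | succ e' ih =>
      rcases Nat.lt_or_ge e (e' + 1) with h' | h'
      · have h1 := ih (by omega)
        have h2 : eraB g e' ≤ eraB g (e' + 1) := by
          have h3 : eraA g e' < eraA g (e' + 1) := eraA_mono_succ g e'
          have h4 := eraA_le_eraB g (e' + 1)
          have h5 : eraB g e' ≤ eraA g (e' + 1) := by rw [eraA_succ]; omega
          omega
        omega
      · have : e = e' + 1 := by omega
        subst this; exact le_refl _

/-! ### The gluing chain -/

variable {X : Type*} [MetricSpace X]

/-- Recursive gluing chain: `S` builds the initial point, `G x v e` glues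
the previous point `x` (on `[0, eraB e]`) with the target `v` for era `e+1`. -/
def chain (S : X → X) (G : X → X → ℕ → X) (t : ℕ → X) : ℕ → X
  | 0 => S (t 0)
  | e + 1 => G (chain S G t e) (t (e + 1)) e

lemma chain_congr (S : X → X) (G : X → X → ℕ → X) (t t' : ℕ → X) (e : ℕ)
    (h : ∀ e' ≤ e, t e' = t' e') : chain S G t e = chain S G t' e := by
  induction e with
  | zero => simp [chain, h 0 (le_refl 0)]
  | succ e ih =>
      simp only [chain]
      rw [ih (fun e' he' => h e' (by omega)), h (e + 1) (le_refl _)]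



lemma phiLow_self (f : X → X) (x : X) {t : ℝ} (ht : 0 < t) : PhiLow f x x t = 1 := by
  have h : ∀ n : ℕ, 1 ≤ n → distCount f x x t n = 1 := by
    intro n hn
    unfold distCount
    have heq : (Finset.range n).filter (fun i => dist (f^[i] x) (f^[i] x) < t)
        = Finset.range n := by
      apply Finset.filter_true_of_mem
      intro i _
      simpa using ht
    rw [heq, Finset.card_range, div_self (by
      exact_mod_cast Nat.one_le_iff_ne_zero.1 hn)]
  unfold PhiLow
  have heqv : (fun n : ℕ => distCount f x x t n) =ᶠ[atTop] (fun _ => (1:ℝ)) := by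
    filter_upwards [eventually_ge_atTop 1] with n hn
    exact h n hn
  rw [liminf_congr heqv]
  exact liminf_const 1

lemma phiUp_symm (f : X → X) (x y : X) (t : ℝ) : PhiUp f x y t = PhiUp f y x t := by
  unfold PhiUp
  congr 1
  funext n
  exact distCount_symm f x y t n

lemma phiLow_symm (f : X → X) (x y : X) (t : ℝ) : PhiLow f x y t = PhiLow f y x t := by
  unfold PhiLow
  congr 1
  funext n
  exact distCount_symm f x y t n

lemma no_preconn {A B t : Set X} (hA : IsCompact A) (hB : IsCompact B) (hAB : Disjoint A B)
    (hsub : t ⊆ A ∪ B) (h1 : (t ∩ A).Nonempty) (h2 : (t ∩ B).Nonempty) :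
    ¬ IsPreconnected t := by
  intro hpc
  obtain ⟨U, V, hU, hV, hAU, hBV, hUV⟩ := SeparatedNhds.of_isCompact_isCompact hA hB hAB
  obtain ⟨a, ha⟩ := h1
  obtain ⟨b, hb⟩ := h2
  obtain ⟨z, hzt, hzUV⟩ := hpc U V hU hV
    (fun w hw => (hsub hw).imp (fun h => hAU h) (fun h => hBV h))
    ⟨a, ha.1, hAU ha.2⟩ ⟨b, hb.1, hBV hb.2⟩
  exact Set.disjoint_left.1 hUV hzUV.1 hzUV.2

lemma nhds_ne_neBot [CompactSpace X] [Nontrivial X] {f : X → X} (hf : Continuous f)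
    (hsurj : Function.Surjective f) (hspec : SpecProp f) : ∀ x : X, (𝓝[≠] x).NeBot := by
  intro x₀
  by_contra hcon
  rw [not_neBot] at hcon
  have hempty : (∅ : Set X) ∈ 𝓝[≠] x₀ := by rw [hcon]; exact Filter.mem_bot
  rw [mem_nhdsWithin] at hempty
  obtain ⟨U, hUopen, hx₀U, hUsub⟩ := hempty
  obtain ⟨r, hr, hball⟩ := Metric.isOpen_iff.1 hUopen x₀ hx₀U
  have hsingle : Metric.ball x₀ r ⊆ {x₀} := by
    intro z hz
    by_contra hne
    exact absurd (hUsub ⟨hball hz, hne⟩) (Set.notMem_empty z)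
  obtain ⟨q', hq'⟩ := exists_ne x₀
  have hd : 0 < dist x₀ q' := dist_pos.2 (Ne.symm hq')
  set γ := min r (dist x₀ q') with hγdef
  have hγ : 0 < γ := lt_min hr hd
  obtain ⟨N, hN, hwin⟩ := spec_windows hspec x₀ hγ
  have hfix : ∀ M, N ≤ M → f^[M] x₀ = x₀ := by
    intro M hM
    obtain ⟨x, hx⟩ := hwin 2 (fun i => if i = 0 then 0 else M) (fun i => if i = 0 then 0 else M)
      (fun i => if i = 0 then x₀ else Classical.choose ((hsurj.iterate M) x₀))
      (by simp) (fun i _ => le_refl _) (fun i hi => by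
        have hieq : i = 0 := by omega
        subst hieq
        simpa using hM)
    have h1 := hx 0 (by omega) 0 (by simp) (by simp)
    have h2 := hx 1 (by omega) M (by simp) (by simp)
    simp only [if_pos rfl] at h1
    simp only [if_neg one_ne_zero] at h2
    rw [Classical.choose_spec ((hsurj.iterate M) x₀)] at h2
    have hxeq : x = x₀ := by
      have : x ∈ Metric.ball x₀ r := by
        rw [Metric.mem_ball]
        simpa using lt_of_lt_of_le h1 (min_le_left _ _)
      exact hsingle this
    rw [hxeq] at h2
    have : f^[M] x₀ ∈ Metric.ball x₀ r := by
      rw [Metric.mem_ball]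
      exact lt_of_lt_of_le h2 (min_le_left _ _)
    exact hsingle this
  have hfx : f x₀ = x₀ := by
    have h1 := hfix N (le_refl _)
    have h2 := hfix (N + 1) (by omega)
    calc f x₀ = f (f^[N] x₀) := by rw [h1]
      _ = f^[N + 1] x₀ := (Function.iterate_succ_apply' f N x₀).symm
      _ = x₀ := h2
  obtain ⟨x, hx⟩ := hwin 2 (fun i => if i = 0 then 0 else N) (fun i => if i = 0 then 0 else N)
    (fun i => if i = 0 then x₀ else Classical.choose ((hsurj.iterate N) q'))
    (by simp) (fun i _ => le_refl _) (fun i hi => by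
      have hieq : i = 0 := by omega
      subst hieq
      simp)
  have h1 := hx 0 (by omega) 0 (by simp) (by simp)
  have h2 := hx 1 (by omega) N (by simp) (by simp)
  simp only [if_pos rfl] at h1
  simp only [if_neg one_ne_zero] at h2
  rw [Classical.choose_spec ((hsurj.iterate N) q')] at h2
  have hxeq : x = x₀ := by
    have : x ∈ Metric.ball x₀ r := by
      rw [Metric.mem_ball]
      simpa using lt_of_lt_of_le h1 (min_le_left _ _)
    exact hsingle this
  rw [hxeq, Function.iterate_fixed hfx] at h2
  exact absurd (lt_of_lt_of_le h2 (min_le_right _ _)) (lt_irrefl _)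


/-! ### The main construction -/

theorem construction {X : Type*} [MetricSpace X] [CompactSpace X] [Nontrivial X]
    (f : X → X) (hf : Continuous f) (hsurj : Function.Surjective f)
    (hspec : SpecProp f) (p : X) (hp : f p = p) :
    ∃ ε : ℝ, 0 < ε ∧ ∃ φ : (ℕ → Bool) → X,
      Continuous φ ∧ Function.Injective φ ∧
      (∀ α, φ α ∈ Tran f) ∧
      (∀ α n, f^[n] (φ α) ≠ p) ∧
      (∀ α β : ℕ → Bool, ∀ a b : ℕ, (α ≠ β ∨ a ≠ b) →
        (∀ t : ℝ, 0 < t → PhiUp f (f^[a] (φ α)) (f^[b] (φ β)) t = 1) ∧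
        PhiLow f (f^[a] (φ α)) (f^[b] (φ β)) ε = 0) ∧
      (∀ α (a : ℕ), (∀ t : ℝ, 0 < t → PhiUp f p (f^[a] (φ α)) t = 1) ∧
        PhiLow f p (f^[a] (φ α)) ε = 0) ∧
      (∀ δ : ℝ, 0 < δ → ∀ m : ℕ, ∃ n, m ≤ n ∧ ∀ α, dist (f^[n] (φ α)) p ≤ δ) ∧
      (∃ η : ℕ → ℝ, (∀ r : ℝ, 0 < r → ∃ E, η E < r) ∧
        ∀ (α β : ℕ → Bool) (E : ℕ), (∀ i, i ≤ E → α i = β i) →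
          dist (φ α) (φ β) ≤ η E) := by
  classical
  obtain ⟨q, hqp⟩ := exists_ne p
  have hR₀ : 0 < dist p q := dist_pos.2 (Ne.symm hqp)
  set γ₀ := dist p q / 8 with hγ₀def
  have hγ₀ : 0 < γ₀ := by positivity
  obtain ⟨N₀, hN₀, hwin₀⟩ := spec_windows hspec p hγ₀
  set T := N₀ + 1 with hTdef
  -- the q-pinned point z⋆
  obtain ⟨zs, hzs0⟩ := exists_shadow_all hf p hγ₀ hwin₀ (fun i => i * T) (fun i => i * T)
    (fun i => Classical.choose ((hsurj.iterate (i * T)) q))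
    (by simp) (fun i => le_refl _) (fun i => by
      show i * T + N₀ ≤ (i + 1) * T
      have h1 : (i + 1) * T = i * T + T := by ring
      omega)
  have hzs : ∀ m : ℕ, dist (f^[m * T] zs) q ≤ γ₀ := by
    intro m
    have h1 := hzs0 m (m * T) (le_refl _) (le_refl _)
    rwa [Classical.choose_spec ((hsurj.iterate (m * T)) q)] at h1
  set K := OmSet f zs with hKdef
  have hKne : K.Nonempty := omSet_nonempty f zs
  have hKfwd : ∀ y ∈ K, f y ∈ K := fun y hy => omSet_fwd hf hy
  set k₀ := hKne.some with hk₀def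
  have hk₀K : k₀ ∈ K := hKne.some_mem
  -- every point of K visits the γ₀-ball around q within N₀ steps
  have hKvisit : ∀ y ∈ K, ∃ t ≤ N₀, dist (f^[t] y) q ≤ γ₀ := by
    intro y hy
    have H : ∀ k : ℕ, ∃ t m : ℕ, t ≤ N₀ ∧ dist (f^[m] zs) y < 1 / (k + 1) ∧
        dist (f^[m + t] zs) q ≤ γ₀ := by
      intro k
      obtain ⟨m, _, hm⟩ := omSet_approx hy 0 (by positivity : (0:ℝ) < 1 / (k + 1))
      have hdm := Nat.div_add_mod m T
      have hTpos : 0 < T := by omega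
      have hmlt : m % T < T := Nat.mod_lt _ hTpos
      have hco : T * (m / T) = (m / T) * T := Nat.mul_comm _ _
      rcases Nat.eq_zero_or_pos (m % T) with h0 | h0
      · refine ⟨0, m, by omega, hm, ?_⟩
        have hmul : m + 0 = (m / T) * T := by omega
        rw [hmul]
        exact hzs (m / T)
      · refine ⟨T - m % T, m, by omega, hm, ?_⟩
        have hco2 : (m / T + 1) * T = (m / T) * T + T := by ring
        have hmul : m + (T - m % T) = (m / T + 1) * T := by omega
        rw [hmul]
        exact hzs (m / T + 1)
    choose tt mm htle hclose hpin using H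
    have hfin : ∃ t', t' ≤ N₀ ∧ {k | tt k = t'}.Infinite := by
      by_contra hcon
      push_neg at hcon
      have hfa : ∀ t' ∈ Set.Iic N₀, {k | tt k = t'}.Finite := by
        intro t' ht'
        apply Set.not_infinite.1
        exact Set.not_infinite.2 (hcon t' ht')
      have hU : (Set.univ : Set ℕ) ⊆ ⋃ t' ∈ Set.Iic N₀, {k | tt k = t'} := by
        intro k _
        exact Set.mem_biUnion (htle k) rfl
      have hfinuniv : (Set.univ : Set ℕ).Finite :=
        Set.Finite.subset ((Set.finite_Iic N₀).biUnion hfa) hU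
      exact Set.infinite_univ hfinuniv
    obtain ⟨t', ht'le, hinf⟩ := hfin
    refine ⟨t', ht'le, le_of_forall_pos_le_add fun η hη => ?_⟩
    obtain ⟨δ, hδ, hδp⟩ := Metric.continuous_iff.1 (hf.iterate t') y η hη
    obtain ⟨k, hk, hkgt⟩ := hinf.exists_gt ⌈1 / δ⌉₊
    have hceil : (1 / δ : ℝ) ≤ ⌈1 / δ⌉₊ := Nat.le_ceil _
    have hkR : (1 / δ : ℝ) < k := lt_of_le_of_lt hceil (by exact_mod_cast hkgt)
    have hklt : 1 / ((k : ℝ) + 1) < δ := by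
      rw [div_lt_iff₀ (by positivity)]
      rw [div_lt_iff₀ hδ] at hkR
      nlinarith [hδ]
    have h1 := hclose k
    have h2 := hδp (f^[mm k] zs) (lt_trans h1 hklt)
    have h3 := hpin k
    have hkt : tt k = t' := hk
    rw [hkt] at h3
    have hiter : f^[t'] (f^[mm k] zs) = f^[mm k + t'] zs := by
      rw [add_comm, Function.iterate_add_apply]
    calc dist (f^[t'] y) q
        ≤ dist (f^[t'] y) (f^[t'] (f^[mm k] zs)) + dist (f^[t'] (f^[mm k] zs)) q :=
          dist_triangle _ _ _
      _ ≤ η + γ₀ := add_le_add (by rw [dist_comm]; exact h2.le) (by rw [hiter]; exact h3)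
      _ = γ₀ + η := by ring
  obtain ⟨ζ₁, hζ₁, hζ₁p⟩ := unif_mod hf N₀ hγ₀
  have hKfar : ∀ y ∈ K, ζ₁ < dist p y := by
    intro y hy
    by_contra hcon
    push_neg at hcon
    obtain ⟨t, ht, htq⟩ := hKvisit y hy
    have h1 := hζ₁p p y hcon t ht
    rw [Function.iterate_fixed hp] at h1
    have h2 : dist p q ≤ dist p (f^[t] y) + dist (f^[t] y) q := dist_triangle _ _ _
    have h3 : dist p q ≤ γ₀ + γ₀ := le_trans h2 (add_le_add h1.le htq)
    rw [hγ₀def] at h3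
    linarith
  -- level-1 constants
  set γ₁ := ζ₁ / 8 with hγ₁def
  have hγ₁ : 0 < γ₁ := by positivity
  obtain ⟨N₁, hN₁, hwin₁⟩ := spec_windows hspec p hγ₁
  have hD2 : 0 < ζ₁ - 2 * γ₁ := by rw [hγ₁def]; linarith
  obtain ⟨ζ₂, hζ₂, hζ₂p⟩ := unif_mod hf N₁ hD2
  -- seeds for large lags
  have Hzl : ∀ c : ℕ, ∃ z : X, N₁ + 1 ≤ c → ∀ j : ℕ, ζ₂ < dist (f^[j] z) (f^[j + c] z) := by
    intro c
    by_cases hc : N₁ + 1 ≤ c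
    · obtain ⟨z, hz⟩ := exists_selflag hf hsurj hp hKfwd hk₀K hγ₁
        (fun y hy => (hKfar y hy).le) hN₁ hwin₁ hζ₂p hc
      exact ⟨z, fun _ => hz⟩
    · exact ⟨p, fun h => absurd h hc⟩
  choose zc hzc using Hzl
  -- the invariant set for small lags
  set c' := (N₁ + 1).factorial with hc'def
  have hc'ge : N₁ + 1 ≤ c' := Nat.self_le_factorial _
  set Ω := OmSet f (zc c') with hΩdef
  have hΩne : Ω.Nonempty := omSet_nonempty _ _
  have hΩlag : ∀ y ∈ Ω, ζ₂ ≤ dist y (f^[c'] y) := by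
    intro y hy
    refine le_of_forall_pos_le_add fun η hη => ?_
    obtain ⟨δ, hδ, hδp⟩ := Metric.continuous_iff.1 (hf.iterate c') y (η / 2) (by positivity)
    have hmin : (0:ℝ) < min δ (η / 2) := lt_min hδ (by positivity)
    obtain ⟨m, _, hm⟩ := omSet_approx hy 0 hmin
    have h1 : ζ₂ < dist (f^[m] (zc c')) (f^[m + c'] (zc c')) := hzc c' hc'ge m
    have h2 : dist (f^[c'] y) (f^[m + c'] (zc c')) < η / 2 := by
      have := hδp (f^[m] (zc c')) (lt_of_lt_of_le hm (min_le_left _ _))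
      rw [dist_comm] at this
      have hit : f^[c'] (f^[m] (zc c')) = f^[m + c'] (zc c') := by
        rw [add_comm, Function.iterate_add_apply]
      rwa [hit] at this
    have h3 : dist (f^[m] (zc c')) y < η / 2 := lt_of_lt_of_le hm (min_le_right _ _)
    have h4 : dist (f^[m] (zc c')) (f^[m + c'] (zc c')) ≤
        dist (f^[m] (zc c')) y + dist y (f^[c'] y) + dist (f^[c'] y) (f^[m + c'] (zc c')) :=
      dist_triangle4 _ _ _ _
    linarith
  have hΩclosed : IsClosed Ω := isClosed_iInter fun n => isClosed_closure
  have hΩnp : ∀ c, 1 ≤ c → c ≤ N₁ → ∀ y ∈ Ω, f^[c] y ≠ y := by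
    intro c h1 h2 y hy hfix
    obtain ⟨k, hk⟩ := Nat.dvd_factorial h1 (by omega : c ≤ N₁ + 1)
    have hiter : f^[c'] y = y := by
      rw [hc'def, hk, Function.iterate_mul]
      exact Function.iterate_fixed hfix k
    have h3 := hΩlag y hy
    rw [hiter] at h3
    simp at h3
    linarith
  have hsmall : ∀ c, 1 ≤ c → c ≤ N₁ → ∃ εc : ℝ, 0 < εc ∧ ∀ y ∈ Ω, εc ≤ dist y (f^[c] y) := by
    intro c h1 h2
    have hcont : ContinuousOn (fun y => dist y (f^[c] y)) Ω :=
      (continuous_id.dist (hf.iterate c)).continuousOn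
    obtain ⟨y₀, hy₀, hmin⟩ := (hΩclosed.isCompact).exists_isMinOn hΩne hcont
    refine ⟨dist y₀ (f^[c] y₀), ?_, fun y hy => (isMinOn_iff.1 hmin) y hy⟩
    rw [dist_pos]
    exact fun h => hΩnp c h1 h2 y₀ hy₀ h.symm
  have hεs : ∃ εs : ℝ, 0 < εs ∧ ∀ c, 1 ≤ c → c ≤ N₁ → ∀ y ∈ Ω, εs ≤ dist y (f^[c] y) := by
    have haux : ∀ n : ℕ, n ≤ N₁ →
        ∃ εs : ℝ, 0 < εs ∧ ∀ c, 1 ≤ c → c ≤ n → ∀ y ∈ Ω, εs ≤ dist y (f^[c] y) := by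
      intro n
      induction n with
      | zero => exact fun _ => ⟨1, one_pos, fun c h1 h2 => by omega⟩
      | succ n ih =>
          intro hn
          obtain ⟨ε1, hε1, hεp1⟩ := ih (by omega)
          obtain ⟨ε2, hε2, hεp2⟩ := hsmall (n + 1) (by omega) hn
          refine ⟨min ε1 ε2, lt_min hε1 hε2, fun c h1 h2 y hy => ?_⟩
          rcases Nat.lt_or_ge c (n + 1) with h | h
          · exact le_trans (min_le_left _ _) (hεp1 c h1 (by omega) y hy)
          · have hceq : c = n + 1 := by omega
            subst hceq
            exact le_trans (min_le_right _ _) (hεp2 y hy)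
    exact haux N₁ (le_refl _)
  obtain ⟨εs, hεs0, hεsp⟩ := hεs
  -- the final scales
  set γ₂ := min ζ₁ (min ζ₂ εs) / 16 with hγ₂def
  have hγ₂ : 0 < γ₂ := by
    have := lt_min hζ₁ (lt_min hζ₂ hεs0)
    rw [hγ₂def]
    positivity
  have hγ₂ζ₁ : 16 * γ₂ ≤ ζ₁ := by
    rw [hγ₂def]
    have := min_le_left ζ₁ (min ζ₂ εs)
    linarith
  have hγ₂ζ₂ : 16 * γ₂ ≤ ζ₂ := by
    rw [hγ₂def]
    have h1 := min_le_right ζ₁ (min ζ₂ εs)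
    have h2 := min_le_left ζ₂ εs
    linarith
  have hγ₂εs : 16 * γ₂ ≤ εs := by
    rw [hγ₂def]
    have h1 := min_le_right ζ₁ (min ζ₂ εs)
    have h2 := min_le_right ζ₂ εs
    linarith
  set γs : ℕ → ℝ := fun e => γ₂ * (1 / 2) ^ (e + 1) with hγsdef
  have hγspos : ∀ e, 0 < γs e := fun e => by
    rw [hγsdef]
    positivity
  have hγsle : ∀ e, γs e ≤ γ₂ := by
    intro e
    rw [hγsdef]
    have h1 : ((1:ℝ) / 2) ^ (e + 1) ≤ 1 := by
      apply pow_le_one₀ <;> norm_num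
    nlinarith
  have hγsmono : ∀ e e', e ≤ e' → γs e' ≤ γs e := by
    intro e e' h
    rw [hγsdef]
    have := pow_le_pow_of_le_one (by norm_num : (0:ℝ) ≤ 1/2) (by norm_num) (by omega : e + 1 ≤ e' + 1)
    nlinarith
  have hγssmall : ∀ r : ℝ, 0 < r → ∃ m₀ : ℕ, ∀ e, m₀ ≤ e → 4 * γs e < r := by
    intro r hr
    obtain ⟨n, hn⟩ := exists_pow_lt_of_lt_one (show (0:ℝ) < r / (4 * γ₂) by positivity)
      (by norm_num : (1:ℝ)/2 < 1)
    refine ⟨n, fun e he => ?_⟩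
    have h1 : γs e ≤ γs n := hγsmono n e he
    have h2 : γs n ≤ γ₂ * (1/2)^n := by
      rw [hγsdef]
      have := pow_le_pow_of_le_one (by norm_num : (0:ℝ) ≤ 1/2) (by norm_num) (by omega : n ≤ n + 1)
      nlinarith
    have h3 : γ₂ * (1/2)^n < γ₂ * (r / (4*γ₂)) := by
      apply mul_lt_mul_of_pos_left hn hγ₂
    have h4 : γ₂ * (r / (4*γ₂)) = r / 4 := by
      field_simp
    linarith
  -- eras
  have SP : ∀ e : ℕ, ∃ N, 0 < N ∧ ∀ (L : ℕ) (a b : ℕ → ℕ) (v : ℕ → X),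
      a 0 = 0 → (∀ i, i < L → a i ≤ b i) → (∀ i, i + 1 < L → b i + N ≤ a (i + 1)) →
      ∃ x : X, ∀ i, i < L → ∀ j, a i ≤ j → j ≤ b i →
        dist (f^[j] x) (f^[j] (v i)) < γs e :=
    fun e => spec_windows hspec p (hγspos e)
  choose NG hNGpos hNGwin using SP
  set A := eraA NG with hAdef
  set B := eraB NG with hBdef
  have hAB : ∀ e, A e < B e := fun e => eraA_lt_eraB NG e
  have hABle : ∀ e, A e ≤ B e := fun e => (hAB e).le
  have hAe : ∀ e, e ≤ A e := fun e => le_eraA NG e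
  have hBmono : ∀ e e', e ≤ e' → B e ≤ B e' := fun e e' h => eraB_mono NG h
  have hBdom : ∀ e, (e + 1) * A e + (e + 1) ≤ B e := fun e => eraB_dominate NG e
  -- the quotient bound
  have hquot : ∀ (s : ℕ) (δ : ℝ), 0 < δ → ∃ m₀ : ℕ, ∀ e, m₀ ≤ e →
      s + A e ≤ B e ∧ ((A e + s : ℕ) : ℝ) ≤ δ * (B e : ℕ) := by
    intro s δ hδ
    obtain ⟨m₁, hm₁⟩ := exists_nat_ge (2 / δ)
    refine ⟨max (max s 1) m₁, fun e he => ?_⟩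
    have hes : s ≤ e := le_trans (le_trans (le_max_left s 1) (le_max_left _ m₁)) he
    have he1 : 1 ≤ e := le_trans (le_trans (le_max_right s 1) (le_max_left _ m₁)) he
    have hem : m₁ ≤ e := le_trans (le_max_right _ m₁) he
    have hAs : s ≤ A e := le_trans hes (hAe e)
    have hA1 : 1 ≤ A e := le_trans he1 (hAe e)
    constructor
    · have := hBdom e
      have h2 : A e + (e + 1) ≤ (e + 1) * A e + (e + 1) := by
        have : A e ≤ (e + 1) * A e := Nat.le_mul_of_pos_left _ (by omega)
        omega
      omega
    · have hc1 : ((A e + s : ℕ) : ℝ) ≤ 2 * (A e : ℕ) := by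
        push_cast
        have : (s:ℝ) ≤ (A e : ℕ) := by exact_mod_cast hAs
        linarith
      have hc2 : (2:ℝ) ≤ δ * (e + 1) := by
        have h3 : (2 / δ : ℝ) ≤ m₁ := hm₁
        have h4 : (m₁:ℝ) ≤ e := by exact_mod_cast hem
        rw [div_le_iff₀ hδ] at h3
        nlinarith
      have hc3 : ((e:ℝ) + 1) * (A e : ℕ) ≤ ((B e : ℕ) : ℝ) := by
        have := hBdom e
        have h5 : (e + 1) * A e ≤ B e := by omega
        exact_mod_cast le_trans (by exact_mod_cast le_refl ((e+1) * A e)) (by exact_mod_cast h5)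
      have hApos : (0:ℝ) < (A e : ℕ) := by exact_mod_cast hA1
      calc ((A e + s : ℕ) : ℝ) ≤ 2 * (A e : ℕ) := hc1
        _ ≤ (δ * (e + 1)) * (A e : ℕ) := by nlinarith
        _ = δ * (((e:ℝ) + 1) * (A e : ℕ)) := by ring
        _ ≤ δ * (B e : ℕ) := by nlinarith
  -- dense sequence
  haveI : Nonempty X := ⟨p⟩
  set w : ℕ → X := TopologicalSpace.denseSeq X with hwdef
  have hwdense : DenseRange w := TopologicalSpace.denseRange_denseSeq X
  set yΩ := hΩne.some with hyΩdef
  have hyΩ : yΩ ∈ Ω := hΩne.some_mem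
  -- targets
  set pre : ℕ → X → X := fun e x => Classical.choose ((hsurj.iterate (A e)) x) with hpredef
  have hpre : ∀ e x, f^[A e] (pre e x) = x := fun e x =>
    Classical.choose_spec ((hsurj.iterate (A e)) x)
  set tgt : ℕ → (ℕ → Bool) → X := fun e α =>
    if eKind e = 0 then pre e (w (ePar e))
    else if eKind e = 1 then p
    else if eKind e = 2 then (if ebit α (ePar e) then pre e k₀ else p)
    else pre e (if ePar e + 1 ≤ N₁ then yΩ else zc (ePar e + 1)) with htgtdef
  -- gluing maps
  have Gex : ∀ (x v : X) (e : ℕ), ∃ x' : X,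
      (∀ j, j ≤ B e → dist (f^[j] x') (f^[j] x) ≤ γs (e + 1)) ∧
      (∀ j, A (e + 1) ≤ j → j ≤ B (e + 1) → dist (f^[j] x') (f^[j] v) ≤ γs (e + 1)) := by
    intro x v e
    obtain ⟨x', hx'⟩ := hNGwin (e + 1) 2
      (fun i => if i = 0 then 0 else A (e + 1))
      (fun i => if i = 0 then B e else B (e + 1))
      (fun i => if i = 0 then x else v)
      (by simp)
      (fun i hi => by
        rcases i with _ | i
        · simp
        · simpa using hABle (e + 1))
      (fun i hi => by
        have hieq : i = 0 := by omega
        subst hieq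
        norm_num
        rw [hAdef, eraA_succ, hBdef])
    refine ⟨x', fun j hj => ?_, fun j hj1 hj2 => ?_⟩
    · have := hx' 0 (by omega) j (by simp) (by simpa using hj)
      simpa using this.le
    · have := hx' 1 (by omega) j (by simpa using hj1) (by simpa using hj2)
      simpa using this.le
  have Sex : ∀ v : X, ∃ x' : X, ∀ j, j ≤ B 0 → dist (f^[j] x') (f^[j] v) ≤ γs 0 := by
    intro v
    obtain ⟨x', hx'⟩ := hNGwin 0 1 (fun _ => 0) (fun _ => B 0) (fun _ => v) rfl
      (fun i hi => Nat.zero_le _) (fun i hi => by omega)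
    exact ⟨x', fun j hj => (hx' 0 (by omega) j (Nat.zero_le _) hj).le⟩
  choose G hG1 hG2 using Gex
  choose S hS using Sex
  set ch : (ℕ → Bool) → ℕ → X := fun α => chain S G (fun e => tgt e α) with hchdef
  have hch0 : ∀ α, ch α 0 = S (tgt 0 α) := fun α => rfl
  have hchsucc : ∀ α e, ch α (e + 1) = G (ch α e) (tgt (e + 1) α) e := fun α e => rfl
  have hown : ∀ α e j, A e ≤ j → j ≤ B e →
      dist (f^[j] (ch α e)) (f^[j] (tgt e α)) ≤ γs e := by
    intro α e j hj1 hj2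
    cases e with
    | zero => exact hS (tgt 0 α) j hj2
    | succ e => exact hG2 (ch α e) (tgt (e + 1) α) e j hj1 hj2
  have hstep : ∀ α e j, j ≤ B e →
      dist (f^[j] (ch α (e + 1))) (f^[j] (ch α e)) ≤ γs (e + 1) :=
    fun α e j hj => hG1 (ch α e) (tgt (e + 1) α) e j hj
  have hgeo : ∀ (e r : ℕ) (α : ℕ → Bool) (j : ℕ), j ≤ B e →
      dist (f^[j] (ch α (e + r))) (f^[j] (ch α e)) ≤
        γ₂ * ((1 / 2) ^ (e + 1) - (1 / 2) ^ (e + r + 1)) := by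
    intro e r
    induction r with
    | zero => intro α j hj; simp
    | succ r ih =>
        intro α j hj
        have h1 := ih α j hj
        have h2 : j ≤ B (e + r) := le_trans hj (hBmono e (e + r) (by omega))
        have h3 := hstep α (e + r) j h2
        have heq : e + (r + 1) = (e + r) + 1 := rfl
        have hd : dist (f^[j] (ch α (e + (r + 1)))) (f^[j] (ch α e)) ≤
            dist (f^[j] (ch α ((e + r) + 1))) (f^[j] (ch α (e + r))) +
            dist (f^[j] (ch α (e + r))) (f^[j] (ch α e)) := by
          rw [heq]
          exact dist_triangle _ _ _
        have hnum : γs (e + r + 1) = γ₂ * ((1/2:ℝ) ^ (e + r + 1) - (1/2) ^ (e + r + 2)) := by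
          rw [hγsdef]
          have : ((1:ℝ)/2) ^ (e + r + 2) = (1/2) ^ (e + r + 1) * (1/2) := pow_succ _ _
          rw [this]
          ring
        have hfin : (1/2:ℝ) ^ (e + (r+1) + 1) = (1/2) ^ (e + r + 2) := by ring_nf
        rw [hfin]
        rw [hnum] at h3
        linarith
  have hcauchy : ∀ α, CauchySeq (ch α) := by
    intro α
    apply cauchySeq_of_dist_le_of_summable (fun e => γs (e + 1))
    · intro n
      have := hstep α n 0 (Nat.zero_le _)
      simpa [dist_comm] using this
    · have hs : Summable (fun e : ℕ => (1/2 : ℝ) ^ e) :=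
        summable_geometric_of_lt_one (by norm_num) (by norm_num)
      have hs2 := hs.mul_left (γ₂ * (1/2) ^ 2)
      apply hs2.congr
      intro e
      rw [hγsdef]
      show γ₂ * (1/2:ℝ)^2 * (1/2)^e = γ₂ * (1/2) ^ (e + 1 + 1)
      rw [pow_add]
      ring
  have hlimex : ∀ α, ∃ x : X, Tendsto (ch α) atTop (𝓝 x) :=
    fun α => cauchySeq_tendsto_of_complete (hcauchy α)
  choose φ hφlim using hlimex
  have htail : ∀ α e j, j ≤ B e → dist (f^[j] (φ α)) (f^[j] (ch α e)) ≤ γs e := by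
    intro α e j hj
    have htend : Tendsto (fun r => ch α (e + r)) atTop (𝓝 (φ α)) := by
      apply (hφlim α).comp
      exact tendsto_atTop_mono (fun r => by simpa using Nat.le_add_left r e) tendsto_id
    have hconv : Tendsto (fun r => dist (f^[j] (ch α (e + r))) (f^[j] (ch α e))) atTop
        (𝓝 (dist (f^[j] (φ α)) (f^[j] (ch α e)))) :=
      ((((hf.iterate j).tendsto _).comp htend).dist tendsto_const_nhds)
    apply le_of_tendsto hconv
    filter_upwards with r
    have h1 := hgeo e r α j hj
    have h2 : γ₂ * ((1/2:ℝ) ^ (e + 1) - (1/2) ^ (e + r + 1)) ≤ γs e := by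
      rw [hγsdef]
      have := pow_pos (by norm_num : (0:ℝ) < 1/2) (e + r + 1)
      nlinarith
    linarith
  have hshadow : ∀ α e j, A e ≤ j → j ≤ B e →
      dist (f^[j] (φ α)) (f^[j] (tgt e α)) ≤ 2 * γs e := by
    intro α e j h1 h2
    calc dist (f^[j] (φ α)) (f^[j] (tgt e α))
        ≤ dist (f^[j] (φ α)) (f^[j] (ch α e)) + dist (f^[j] (ch α e)) (f^[j] (tgt e α)) :=
          dist_triangle _ _ _
      _ ≤ γs e + γs e := add_le_add (htail α e j h2) (hown α e j h1 h2)
      _ = 2 * γs e := by ring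
  -- dependence on coordinates
  have htgteq : ∀ (α β : ℕ → Bool) (E : ℕ), (∀ i, i ≤ E → α i = β i) →
      ∀ e, e ≤ E → tgt e α = tgt e β := by
    intro α β E h e he
    have hcoord : α (ePar e / 2) = β (ePar e / 2) :=
      h _ (le_trans (Nat.div_le_self _ _) (le_trans (ePar_le e) he))
    simp only [htgtdef]
    rw [ebit_depends α β (ePar e) hcoord]
  have hcont9 : ∀ (α β : ℕ → Bool) (E : ℕ), (∀ e, e ≤ E → tgt e α = tgt e β) →
      dist (φ α) (φ β) ≤ 2 * γs E := by
    intro α β E h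
    have hcheq : ch α E = ch β E := by
      rw [hchdef]
      exact chain_congr S G _ _ E (fun e he => h e he)
    have h1 : dist (φ α) (ch α E) ≤ γs E := by
      have := htail α E 0 (Nat.zero_le _)
      simpa using this
    have h2 : dist (φ β) (ch β E) ≤ γs E := by
      have := htail β E 0 (Nat.zero_le _)
      simpa using this
    calc dist (φ α) (φ β) ≤ dist (φ α) (ch α E) + dist (ch α E) (φ β) := dist_triangle _ _ _
      _ = dist (φ α) (ch α E) + dist (φ β) (ch β E) := by
          rw [hcheq, dist_comm (ch β E) (φ β)]
      _ ≤ γs E + γs E := add_le_add h1 h2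
      _ = 2 * γs E := by ring
  -- continuity of φ
  have hφcont : Continuous φ := by
    rw [continuous_iff_continuousAt]
    intro α
    rw [ContinuousAt, Metric.tendsto_nhds]
    intro ε' hε'
    obtain ⟨E, hE⟩ : ∃ E : ℕ, 2 * γs E < ε' := by
      obtain ⟨m₀, hm₀⟩ := hγssmall ε' hε'
      have h1 := hm₀ m₀ (le_refl _)
      have h2 := hγspos m₀
      exact ⟨m₀, by linarith⟩
    have hV : {β : ℕ → Bool | ∀ i, i ≤ E → β i = α i} ∈ 𝓝 α := by
      have heq : {β : ℕ → Bool | ∀ i, i ≤ E → β i = α i}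
          = ⋂ i ∈ Finset.range (E + 1), {β : ℕ → Bool | β i = α i} := by
        ext β
        simp [Nat.lt_succ_iff]
      rw [heq]
      have hopen : IsOpen (⋂ i ∈ Finset.range (E + 1), {β : ℕ → Bool | β i = α i}) := by
        apply isOpen_biInter_finset
        intro i _
        have hpre2 : {β : ℕ → Bool | β i = α i} = (fun β : ℕ → Bool => β i) ⁻¹' {α i} := rfl
        rw [hpre2]
        exact (isOpen_discrete _).preimage (continuous_apply i)
      exact hopen.mem_nhds (by simp)
    filter_upwards [hV] with β hβ
    have h3 := hcont9 β α E (htgteq β α E hβ)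
    calc dist (φ β) (φ α) ≤ 2 * γs E := h3
      _ < ε' := hE
  -- pin lemmas
  have pinP : ∀ (α : ℕ → Bool) (e : ℕ), tgt e α = p → ∀ j, A e ≤ j → j ≤ B e →
      dist (f^[j] (φ α)) p ≤ 2 * γs e := by
    intro α e htg j h1 h2
    have h3 := hshadow α e j h1 h2
    rwa [htg, Function.iterate_fixed hp] at h3
  have pinPre : ∀ (α : ℕ → Bool) (e : ℕ) (x : X), tgt e α = pre e x → ∀ j, A e ≤ j → j ≤ B e →
      dist (f^[j] (φ α)) (f^[j - A e] x) ≤ 2 * γs e := by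
    intro α e x htg j h1 h2
    have h3 := hshadow α e j h1 h2
    rw [htg] at h3
    have h4 : f^[j] (pre e x) = f^[j - A e] x := by
      have h5 : j = (j - A e) + A e := by omega
      rw [h5, Function.iterate_add_apply, hpre]
      congr 1
      omega
    rwa [h4] at h3
  have tgt_track : ∀ (α : ℕ → Bool) e, eKind e = 0 → tgt e α = pre e (w (ePar e)) := by
    intro α e hk; simp [htgtdef, hk]
  have tgt_pfix : ∀ (α : ℕ → Bool) e, eKind e = 1 → tgt e α = p := by
    intro α e hk; simp [htgtdef, hk]
  have tgt_bit_true : ∀ (α : ℕ → Bool) e, eKind e = 2 → ebit α (ePar e) = true →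
      tgt e α = pre e k₀ := by
    intro α e hk hb; simp [htgtdef, hk, hb]
  have tgt_bit_false : ∀ (α : ℕ → Bool) e, eKind e = 2 → ebit α (ePar e) = false →
      tgt e α = p := by
    intro α e hk hb; simp [htgtdef, hk, hb]
  have tgt_lag : ∀ (α : ℕ → Bool) e, eKind e = 3 →
      tgt e α = pre e (if ePar e + 1 ≤ N₁ then yΩ else zc (ePar e + 1)) := by
    intro α e hk; simp [htgtdef, hk]
  have hpclose : ∀ (α : ℕ → Bool) e, eKind e = 1 → ∀ j, A e ≤ j → j ≤ B e →
      dist (f^[j] (φ α)) p ≤ 2 * γs e := fun α e hk => pinP α e (tgt_pfix α e hk)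
  -- far estimates
  have hbitfar : ∀ (α β : ℕ → Bool) (e : ℕ), eKind e = 2 → ebit α (ePar e) = true →
      ebit β (ePar e) = false → ∀ j₁ j₂, A e ≤ j₁ → j₁ ≤ B e → A e ≤ j₂ → j₂ ≤ B e →
      12 * γ₂ ≤ dist (f^[j₁] (φ α)) (f^[j₂] (φ β)) := by
    intro α β e hk hba hbb j₁ j₂ h1 h2 h3 h4
    have hKA := pinPre α e k₀ (tgt_bit_true α e hk hba) j₁ h1 h2
    have hPB := pinP β e (tgt_bit_false β e hk hbb) j₂ h3 h4
    have hyK : f^[j₁ - A e] k₀ ∈ K := omSet_iter_fwd hf hk₀K _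
    have hfar := hKfar _ hyK
    have htri : dist p (f^[j₁ - A e] k₀) ≤
        dist p (f^[j₂] (φ β)) + dist (f^[j₂] (φ β)) (f^[j₁] (φ α)) +
        dist (f^[j₁] (φ α)) (f^[j₁ - A e] k₀) := dist_triangle4 _ _ _ _
    have hγse : γs e ≤ γ₂ := hγsle e
    have h5 : dist p (f^[j₂] (φ β)) ≤ 2 * γs e := by rw [dist_comm]; exact hPB
    have h6 : ζ₁ ≤ dist p (f^[j₁ - A e] k₀) := hfar.le
    rw [dist_comm]
    linarith [hγ₂ζ₁]
  have hpfar : ∀ (α : ℕ → Bool) (e : ℕ), eKind e = 2 → ebit α (ePar e) = true →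
      ∀ j, A e ≤ j → j ≤ B e → 12 * γ₂ ≤ dist p (f^[j] (φ α)) := by
    intro α e hk hba j h1 h2
    have hKA := pinPre α e k₀ (tgt_bit_true α e hk hba) j h1 h2
    have hyK : f^[j - A e] k₀ ∈ K := omSet_iter_fwd hf hk₀K _
    have hfar := hKfar _ hyK
    have htri : dist p (f^[j - A e] k₀) ≤
        dist p (f^[j] (φ α)) + dist (f^[j] (φ α)) (f^[j - A e] k₀) := dist_triangle _ _ _
    have hγse : γs e ≤ γ₂ := hγsle e
    linarith [hγ₂ζ₁, hfar.le]
  have hlagfar : ∀ (α : ℕ → Bool) (e : ℕ), eKind e = 3 → ∀ j, A e ≤ j →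
      j + (ePar e + 1) ≤ B e →
      12 * γ₂ ≤ dist (f^[j] (φ α)) (f^[j + (ePar e + 1)] (φ α)) := by
    intro α e hk j h1 h2
    have htg := tgt_lag α e hk
    have hA2 := pinPre α e _ htg j h1 (by omega)
    have hB2 := pinPre α e _ htg (j + (ePar e + 1)) (by omega) h2
    have hidx : (j + (ePar e + 1)) - A e = (j - A e) + (ePar e + 1) := by omega
    rw [hidx] at hB2
    have hγse : γs e ≤ γ₂ := hγsle e
    by_cases hsm : ePar e + 1 ≤ N₁
    · rw [if_pos hsm] at hA2 hB2
      have hyΩ' : f^[j - A e] yΩ ∈ Ω := omSet_iter_fwd hf hyΩ _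
      have hεc := hεsp (ePar e + 1) (by omega) hsm _ hyΩ'
      have hit : f^[(j - A e) + (ePar e + 1)] yΩ = f^[ePar e + 1] (f^[j - A e] yΩ) := by
        rw [add_comm, Function.iterate_add_apply]
      rw [hit] at hB2
      have htri : dist (f^[j - A e] yΩ) (f^[ePar e + 1] (f^[j - A e] yΩ)) ≤
          dist (f^[j - A e] yΩ) (f^[j] (φ α)) +
          dist (f^[j] (φ α)) (f^[j + (ePar e + 1)] (φ α)) +
          dist (f^[j + (ePar e + 1)] (φ α)) (f^[ePar e + 1] (f^[j - A e] yΩ)) :=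
        dist_triangle4 _ _ _ _
      have h5 : dist (f^[j - A e] yΩ) (f^[j] (φ α)) ≤ 2 * γs e := by
        rw [dist_comm]; exact hA2
      linarith [hγ₂εs]
    · rw [if_neg hsm] at hA2 hB2
      have hζ := hzc (ePar e + 1) (by omega) (j - A e)
      have htri : dist (f^[j - A e] (zc (ePar e + 1))) (f^[(j - A e) + (ePar e + 1)] (zc (ePar e + 1))) ≤
          dist (f^[j - A e] (zc (ePar e + 1))) (f^[j] (φ α)) +
          dist (f^[j] (φ α)) (f^[j + (ePar e + 1)] (φ α)) +
          dist (f^[j + (ePar e + 1)] (φ α)) (f^[(j - A e) + (ePar e + 1)] (zc (ePar e + 1))) :=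
        dist_triangle4 _ _ _ _
      have h5 : dist (f^[j - A e] (zc (ePar e + 1))) (f^[j] (φ α)) ≤ 2 * γs e := by
        rw [dist_comm]; exact hA2
      linarith [hγ₂ζ₂]
  -- the scrambling scale
  set ε := 4 * γ₂ with hεdef
  have hεpos : 0 < ε := by rw [hεdef]; positivity
  have hεle : ε ≤ 12 * γ₂ := by rw [hεdef]; linarith
  -- generic PhiLow
  have hPhiLowGen : ∀ (x y : X) (M : ℕ),
      (∀ m : ℕ, ∃ e, m ≤ e ∧ (∀ j, A e ≤ j → j + M ≤ B e →
        ε ≤ dist (f^[j] x) (f^[j] y))) → PhiLow f x y ε = 0 := by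
    intro x y M hfam
    apply phiLow_eq_zero
    intro δ hδ m
    obtain ⟨m₀, hm₀⟩ := hquot M δ hδ
    obtain ⟨e, he, hfar⟩ := hfam (max m m₀)
    obtain ⟨hMB, hABq⟩ := hm₀ e (le_trans (le_max_right _ _) he)
    have hBpos : 0 < B e := by have := hAB e; omega
    refine ⟨B e, le_trans (le_max_left _ _) (le_trans he (le_trans (hAe e) (hABle e))), ?_⟩
    have hcount := distCount_le_of_far f x y ε (n := B e) (lo := A e) (hi := B e - M)
      (by omega) hBpos (fun j hj1 hj2 => by
        rw [not_lt]
        exact hfar j hj1 (by omega))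
    have hnat : (B e - ((B e - M) - A e)) = A e + M := by omega
    rw [hnat] at hcount
    apply le_trans hcount
    rw [div_le_iff₀ (by exact_mod_cast hBpos)]
    exact hABq
  have hPhiLowSymm : ∀ x y : X, PhiLow f x y ε = PhiLow f y x ε := by
    intro x y
    unfold PhiLow
    congr 1
    funext n
    exact distCount_symm f x y ε n
  -- generic PhiUp
  have hPhiUpGen : ∀ (x y : X) (M : ℕ),
      (∀ t' : ℝ, 0 < t' → ∀ m : ℕ, ∃ e, m ≤ e ∧ (∀ j, A e ≤ j → j + M ≤ B e →
        dist (f^[j] x) (f^[j] y) < t')) → ∀ t : ℝ, 0 < t → PhiUp f x y t = 1 := by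
    intro x y M hfam t ht
    apply phiUp_eq_one
    intro δ hδ m
    obtain ⟨m₀, hm₀⟩ := hquot (M + 1) δ hδ
    obtain ⟨e, he, hcl⟩ := hfam t ht (max m m₀)
    obtain ⟨hMB, hABq⟩ := hm₀ e (le_trans (le_max_right _ _) he)
    have hBpos : 0 < B e + 1 := by omega
    refine ⟨B e + 1, le_trans (le_max_left _ _)
      (le_trans he (le_trans (hAe e) (by have := hABle e; omega))), ?_⟩
    have hcount := distCount_ge_of_close f x y t (n := B e + 1) (lo := A e) (hi := B e + 1 - M)
      (by omega) hBpos (fun j hj1 hj2 => hcl j hj1 (by omega))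
    have hnat : ((B e + 1 - M) - A e) = (B e + 1) - (A e + M) := by omega
    rw [hnat] at hcount
    apply le_trans ?_ hcount
    have hle : A e + M ≤ B e + 1 := by omega
    have hcast : (((B e + 1) - (A e + M) : ℕ) : ℝ) = ((B e : ℝ) + 1) - ((A e : ℕ) + M : ℕ) := by
      push_cast [hle]
      ring
    rw [hcast]
    rw [le_div_iff₀ (by exact_mod_cast hBpos)]
    have h7 : ((A e + M : ℕ) : ℝ) ≤ δ * (B e : ℕ) := by
      apply le_trans ?_ hABq
      push_cast
      linarith
    have h8 : (0:ℝ) ≤ δ := hδ.le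
    have h9 : ((A e + M : ℕ) : ℝ) = ((A e : ℕ) : ℝ) + M := by push_cast; ring
    push_cast
    nlinarith
  -- era selection with small precision
  have heraget : ∀ (u r m : ℕ), r < 4 → ∀ thr : ℝ, 0 < thr →
      ∃ e, m ≤ e ∧ eKind e = r ∧ ePar e = u ∧ 4 * γs e < thr := by
    intro u r m hr thr hthr
    obtain ⟨m₀, hm₀⟩ := hγssmall thr hthr
    obtain ⟨e, he, hk, hpr⟩ := exists_era u r (max m m₀) hr
    exact ⟨e, le_trans (le_max_left _ _) he, hk, hpr, hm₀ e (le_trans (le_max_right _ _) he)⟩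
  -- effective bits
  have hebit_even : ∀ (α : ℕ → Bool) (i : ℕ), ebit α (2 * i) = α i := by
    intro α i
    unfold ebit
    have h1 : ¬ (2 * i) % 4 = 1 := by omega
    have h2 : (2 * i) % 2 = 0 := by omega
    have h3 : 2 * i / 2 = i := by omega
    simp [h1, h2, h3]
  have hebit_one : ∀ α : ℕ → Bool, ebit α 1 = true := by
    intro α; unfold ebit; norm_num
  -- injectivity
  have hφinj : Function.Injective φ := by
    intro α β hαβ
    by_contra hne
    obtain ⟨i, hi⟩ := Function.ne_iff.1 hne
    obtain ⟨e, he, hk, hpar⟩ := exists_era (2 * i) 2 0 (by omega)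
    have hfar : 12 * γ₂ ≤ dist (f^[A e] (φ α)) (f^[A e] (φ β)) := by
      rcases Bool.eq_false_or_eq_true (α i) with ha | ha
      · have hbb : β i = false := by
          cases hβ : β i
          · rfl
          · exact absurd (ha.trans hβ.symm) hi
        exact hbitfar α β e hk (by rw [hpar, hebit_even]; exact ha)
          (by rw [hpar, hebit_even]; exact hbb) (A e) (A e) (le_refl _) (hABle e)
          (le_refl _) (hABle e)
      · have hbb : β i = true := by
          cases hβ : β i
          · exact absurd (ha.trans hβ.symm) hi
          · rfl
        rw [dist_comm]
        exact hbitfar β α e hk (by rw [hpar, hebit_even]; exact hbb)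
          (by rw [hpar, hebit_even]; exact ha) (A e) (A e) (le_refl _) (hABle e)
          (le_refl _) (hABle e)
    rw [hαβ] at hfar
    simp at hfar
    linarith
  -- transitivity
  have hTran : ∀ α, φ α ∈ Tran f := by
    intro α
    show Dense (Set.range fun n : ℕ => f^[n] (φ α))
    rw [Metric.dense_iff]
    intro u r hr
    obtain ⟨i, hwi⟩ := Metric.denseRange_iff.1 hwdense u (r / 2) (by positivity)
    obtain ⟨e, he, hk, hpar, hγe⟩ := heraget i 0 0 (by omega) (r / 2) (by positivity)
    have htr := pinPre α e _ (tgt_track α e hk) (A e) (le_refl _) (hABle e)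
    rw [Nat.sub_self, Function.iterate_zero_apply, hpar] at htr
    refine ⟨f^[A e] (φ α), ?_, Set.mem_range_self _⟩
    rw [Metric.mem_ball]
    have hd : dist (f^[A e] (φ α)) u ≤ dist (f^[A e] (φ α)) (w i) + dist (w i) u :=
      dist_triangle _ _ _
    rw [dist_comm (w i) u] at hd
    have hγ4 : 2 * γs e < r / 2 := by linarith [hγspos e]
    calc dist (f^[A e] (φ α)) u ≤ 2 * γs e + dist u (w i) := by linarith
      _ < r / 2 + r / 2 := by linarith
      _ = r := by ring
  -- never hits p
  have hnotp : ∀ (α : ℕ → Bool) (n : ℕ), f^[n] (φ α) ≠ p := by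
    intro α n hcon
    obtain ⟨e, he, hk, hpar⟩ := exists_era 1 2 n (by omega)
    have hfar := hpfar α e hk (by rw [hpar]; exact hebit_one α) (A e) (le_refl _) (hABle e)
    have hAeN : n ≤ A e := le_trans he (hAe e)
    have hpeq : f^[A e] (φ α) = p := by
      have h5 : A e = (A e - n) + n := by omega
      rw [h5, Function.iterate_add_apply, hcon, Function.iterate_fixed hp]
    rw [hpeq] at hfar
    simp at hfar
    linarith
  -- scrambled pairs among orbit points of the Cantor family
  have hlagLow : ∀ (α : ℕ → Bool) (a b : ℕ), a < b →
      PhiLow f (f^[a] (φ α)) (f^[b] (φ α)) ε = 0 := by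
    intro α a b hab
    apply hPhiLowGen _ _ (a + b)
    intro m
    obtain ⟨e, he, hk, hpar⟩ := exists_era (b - a - 1) 3 m (by omega)
    refine ⟨e, he, fun j h1 h2 => ?_⟩
    have hc : ePar e + 1 = b - a := by omega
    have hfar := hlagfar α e hk (j + a) (by omega) (by rw [hc]; omega)
    rw [hc] at hfar
    have hre1 : f^[j] (f^[a] (φ α)) = f^[j + a] (φ α) := by
      rw [← Function.iterate_add_apply]
    have hre2 : f^[j] (f^[b] (φ α)) = f^[j + a + (b - a)] (φ α) := by
      rw [← Function.iterate_add_apply]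
      congr 1
      omega
    rw [hre1, hre2]
    exact le_trans hεle hfar
  have hpair : ∀ (α β : ℕ → Bool) (a b : ℕ), (α ≠ β ∨ a ≠ b) →
      (∀ t : ℝ, 0 < t → PhiUp f (f^[a] (φ α)) (f^[b] (φ β)) t = 1) ∧
      PhiLow f (f^[a] (φ α)) (f^[b] (φ β)) ε = 0 := by
    intro α β a b hcase
    constructor
    · apply hPhiUpGen _ _ (a + b)
      intro t' ht' m
      obtain ⟨e, he, hk, hpar, hγe⟩ := heraget 0 1 m (by omega) t' ht'
      refine ⟨e, he, fun j h1 h2 => ?_⟩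
      have hc1 := hpclose α e hk (j + a) (by omega) (by omega)
      have hc2 := hpclose β e hk (j + b) (by omega) (by omega)
      have hre1 : f^[j] (f^[a] (φ α)) = f^[j + a] (φ α) := by
        rw [← Function.iterate_add_apply]
      have hre2 : f^[j] (f^[b] (φ β)) = f^[j + b] (φ β) := by
        rw [← Function.iterate_add_apply]
      rw [hre1, hre2]
      have htri : dist (f^[j + a] (φ α)) (f^[j + b] (φ β)) ≤
          dist (f^[j + a] (φ α)) p + dist p (f^[j + b] (φ β)) := dist_triangle _ _ _
      rw [dist_comm p (f^[j + b] (φ β))] at htri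
      linarith
    · by_cases hαβ : α = β
      · subst hαβ
        have hab : a ≠ b := by tauto
        rcases Nat.lt_or_ge a b with h | h
        · exact hlagLow α a b h
        · have hba : b < a := by omega
          rw [hPhiLowSymm]
          exact hlagLow α b a hba
      · obtain ⟨i, hi⟩ := Function.ne_iff.1 hαβ
        apply hPhiLowGen _ _ (a + b)
        intro m
        obtain ⟨e, he, hk, hpar⟩ := exists_era (2 * i) 2 m (by omega)
        refine ⟨e, he, fun j h1 h2 => ?_⟩
        have hre1 : f^[j] (f^[a] (φ α)) = f^[j + a] (φ α) := by
          rw [← Function.iterate_add_apply]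
        have hre2 : f^[j] (f^[b] (φ β)) = f^[j + b] (φ β) := by
          rw [← Function.iterate_add_apply]
        rw [hre1, hre2]
        rcases Bool.eq_false_or_eq_true (α i) with ha | ha
        · have hbb : β i = false := by
            cases hβ : β i
            · rfl
            · exact absurd (ha.trans hβ.symm) hi
          have := hbitfar α β e hk (by rw [hpar, hebit_even]; exact ha)
            (by rw [hpar, hebit_even]; exact hbb) (j + a) (j + b)
            (by omega) (by omega) (by omega) (by omega)
          exact le_trans hεle this
        · have hbb : β i = true := by
            cases hβ : β i
            · exact absurd (ha.trans hβ.symm) hi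
            · rfl
          have := hbitfar β α e hk (by rw [hpar, hebit_even]; exact hbb)
            (by rw [hpar, hebit_even]; exact ha) (j + b) (j + a)
            (by omega) (by omega) (by omega) (by omega)
          rw [dist_comm]
          exact le_trans hεle this
  have hppair : ∀ (α : ℕ → Bool) (a : ℕ),
      (∀ t : ℝ, 0 < t → PhiUp f p (f^[a] (φ α)) t = 1) ∧
      PhiLow f p (f^[a] (φ α)) ε = 0 := by
    intro α a
    constructor
    · apply hPhiUpGen _ _ a
      intro t' ht' m
      obtain ⟨e, he, hk, hpar, hγe⟩ := heraget 0 1 m (by omega) t' ht'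
      refine ⟨e, he, fun j h1 h2 => ?_⟩
      have hc2 := hpclose α e hk (j + a) (by omega) (by omega)
      have hre1 : f^[j] p = p := Function.iterate_fixed hp j
      have hre2 : f^[j] (f^[a] (φ α)) = f^[j + a] (φ α) := by
        rw [← Function.iterate_add_apply]
      rw [hre1, hre2, dist_comm]
      linarith
    · apply hPhiLowGen _ _ a
      intro m
      obtain ⟨e, he, hk, hpar⟩ := exists_era 1 2 m (by omega)
      refine ⟨e, he, fun j h1 h2 => ?_⟩
      have hre1 : f^[j] p = p := Function.iterate_fixed hp j
      have hre2 : f^[j] (f^[a] (φ α)) = f^[j + a] (φ α) := by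
        rw [← Function.iterate_add_apply]
      rw [hre1, hre2]
      exact le_trans hεle (hpfar α e hk (by rw [hpar]; exact hebit_one α) (j + a)
        (by omega) (by omega))
  have hpret : ∀ δ : ℝ, 0 < δ → ∀ m : ℕ, ∃ n, m ≤ n ∧ ∀ α, dist (f^[n] (φ α)) p ≤ δ := by
    intro δ hδ m
    obtain ⟨e, he, hk, hpar, hγe⟩ := heraget 0 1 m (by omega) δ hδ
    refine ⟨A e, le_trans he (hAe e), fun α => ?_⟩
    have := hpclose α e hk (A e) (le_refl _) (hABle e)
    linarith [hγspos e]
  refine ⟨ε, hεpos, φ, hφcont, hφinj, hTran, hnotp, hpair, hppair, hpret,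
    fun E => 2 * γs E, fun r hr => ?_, fun α β E h => hcont9 α β E (htgteq α β E h)⟩
  obtain ⟨m₀, hm₀⟩ := hγssmall r hr
  have h1 := hm₀ m₀ (le_refl _)
  have h2 := hγspos m₀
  exact ⟨m₀, by show 2 * γs m₀ < r; linarith⟩


end SpecWork

theorem specification_implies_invariant_scrambled_set
    {X : Type*} [MetricSpace X] [CompactSpace X] [Nontrivial X]
    (f : X → X) (hf : Continuous f) (hsurj : Function.Surjective f)
    (hspec : SpecProp f)
    (p : X) (hp : f p = p) :
    ∃ ε : ℝ, 0 < ε ∧ ∃ D : Set X, IsMycielski D ∧ Dense D ∧ DistScrambled f D ε ∧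
      f '' D ⊆ D ∧ p ∈ D ∧ D ⊆ (Tran f ∩ Rec f) ∪ {p} := by
  classical
  obtain ⟨ε, hε, φ, hφcont, hφinj, hTran, hnotp, hpair, hppair, hpret, η, hηsmall, hηbound⟩ :=
    SpecWork.construction f hf hsurj hspec p hp
  haveI hNB : ∀ x : X, (𝓝[≠] x).NeBot := SpecWork.nhds_ne_neBot hf hsurj hspec
  set C := Set.range φ with hCdef
  have hCne : C.Nonempty := ⟨φ (fun _ => false), Set.mem_range_self _⟩
  have hCcomp : IsCompact C := isCompact_range hφcont
  -- distinct parameters give distinct orbit points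
  have hdistinct : ∀ (α β : ℕ → Bool) (m : ℕ), α ≠ β → f^[m] (φ α) ≠ f^[m] (φ β) := by
    intro α β m hne heq
    have h1 := (hpair α β m m (Or.inl hne)).2
    rw [heq] at h1
    rw [SpecWork.phiLow_self f (f^[m] (φ β)) hε] at h1
    exact one_ne_zero h1
  have hinjm : ∀ m : ℕ, Set.InjOn (f^[m]) C := by
    intro m x hx y hy heq
    obtain ⟨α, rfl⟩ := hx
    obtain ⟨β, rfl⟩ := hy
    by_contra hne2
    exact hdistinct α β m (fun h => hne2 (by rw [h])) heq
  -- flips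
  have hflipne : ∀ (α : ℕ → Bool) (k : ℕ), Function.update α k (!(α k)) ≠ α := by
    intro α k h
    have h2 := congrFun h k
    rw [Function.update_self] at h2
    exact (Bool.not_ne_self (α k)) h2
  have hflipagree : ∀ (α : ℕ → Bool) (k i : ℕ), i ≠ k →
      Function.update α k (!(α k)) i = α i := by
    intro α k i hik
    exact Function.update_of_ne hik _ _
  -- pieces are Cantor sets
  have hpiece_ne : ∀ m : ℕ, (f^[m] '' C).Nonempty := fun m => hCne.image _
  have hpiece_comp : ∀ m : ℕ, IsCompact (f^[m] '' C) := fun m => hCcomp.image (hf.iterate m)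
  have hpiece_perf : ∀ m : ℕ, Perfect (f^[m] '' C) := by
    intro m
    constructor
    · exact (hpiece_comp m).isClosed
    · intro x hx
      rw [accPt_iff_nhds]
      intro U hU
      obtain ⟨x₀, hx₀, rfl⟩ := hx
      obtain ⟨α, rfl⟩ := hx₀
      obtain ⟨r, hr, hball⟩ := Metric.mem_nhds_iff.1 hU
      obtain ⟨dd, hdd, hddp⟩ := Metric.continuous_iff.1 (hf.iterate m) (φ α) r hr
      obtain ⟨E, hE⟩ := hηsmall dd hdd
      set β := Function.update α (E + 1) (!(α (E + 1))) with hβdef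
      have hagree : ∀ i, i ≤ E → β i = α i := fun i hi => hflipagree α (E + 1) i (by omega)
      have hdist : dist (φ β) (φ α) ≤ η E := hηbound β α E hagree
      refine ⟨f^[m] (φ β), ⟨?_, ⟨φ β, ⟨β, rfl⟩, rfl⟩⟩, ?_⟩
      · apply hball
        rw [Metric.mem_ball]
        exact hddp _ (lt_of_le_of_lt hdist hE)
      · exact hdistinct β α m (hflipne α (E + 1)) 
  have hpiece_td : ∀ m : ℕ, IsTotallyDisconnected (f^[m] '' C) := by
    intro m t hts hpc x hx y hy
    by_contra hxy
    obtain ⟨x₀, ⟨α, rfl⟩, rfl⟩ := hts hx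
    obtain ⟨y₀, ⟨β, rfl⟩, rfl⟩ := hts hy
    have hab : α ≠ β := fun h => hxy (by rw [h])
    obtain ⟨i, hi⟩ := Function.ne_iff.1 hab
    have hclosed : ∀ b : Bool, IsClosed {γ : ℕ → Bool | γ i = b} := by
      intro b
      have : {γ : ℕ → Bool | γ i = b} = (fun γ : ℕ → Bool => γ i) ⁻¹' {b} := rfl
      rw [this]
      exact (isClosed_discrete _).preimage (continuous_apply i)
    have hKb : ∀ b : Bool, IsCompact (f^[m] '' (φ '' {γ : ℕ → Bool | γ i = b})) := by
      intro b
      exact (((hclosed b).isCompact).image hφcont).image (hf.iterate m)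
    have hdisj : Disjoint (f^[m] '' (φ '' {γ : ℕ → Bool | γ i = false}))
        (f^[m] '' (φ '' {γ : ℕ → Bool | γ i = true})) := by
      rw [Set.disjoint_left]
      rintro z ⟨_, ⟨γ₀, hγ₀, rfl⟩, hz₀⟩ ⟨_, ⟨γ₁, hγ₁, rfl⟩, hz₁⟩
      have hφeq : φ γ₀ = φ γ₁ :=
        hinjm m ⟨γ₀, rfl⟩ ⟨γ₁, rfl⟩ (hz₀.trans hz₁.symm)
      have := hφinj hφeq
      rw [this] at hγ₀
      rw [Set.mem_setOf_eq] at hγ₀ hγ₁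
      rw [hγ₀] at hγ₁
      exact Bool.false_ne_true hγ₁
    have hcover : t ⊆ (f^[m] '' (φ '' {γ : ℕ → Bool | γ i = false})) ∪
        (f^[m] '' (φ '' {γ : ℕ → Bool | γ i = true})) := by
      intro z hz
      obtain ⟨z₀, ⟨γ, rfl⟩, rfl⟩ := hts hz
      rcases Bool.eq_false_or_eq_true (γ i) with h | h
      · exact Or.inr ⟨φ γ, ⟨γ, h, rfl⟩, rfl⟩
      · exact Or.inl ⟨φ γ, ⟨γ, h, rfl⟩, rfl⟩
    have hmemx : f^[m] (φ α) ∈ f^[m] '' (φ '' {γ : ℕ → Bool | γ i = α i}) :=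
      ⟨φ α, ⟨α, rfl, rfl⟩, rfl⟩
    have hmemy : f^[m] (φ β) ∈ f^[m] '' (φ '' {γ : ℕ → Bool | γ i = β i}) :=
      ⟨φ β, ⟨β, rfl, rfl⟩, rfl⟩
    rcases Bool.eq_false_or_eq_true (α i) with ha | ha
    · have hb : β i = false := by
        cases hβ : β i
        · rfl
        · rw [ha, hβ] at hi; exact absurd rfl hi
      rw [ha] at hmemx
      rw [hb] at hmemy
      exact SpecWork.no_preconn (hKb false) (hKb true) hdisj hcover
        ⟨_, hy, hmemy⟩ ⟨_, hx, hmemx⟩ hpc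
    · have hb : β i = true := by
        cases hβ : β i
        · rw [ha, hβ] at hi; exact absurd rfl hi
        · rfl
      rw [ha] at hmemx
      rw [hb] at hmemy
      exact SpecWork.no_preconn (hKb false) (hKb true) hdisj hcover
        ⟨_, hx, hmemx⟩ ⟨_, hy, hmemy⟩ hpc
  have hpieceCantor : ∀ m : ℕ, IsCantorSet (f^[m] '' C) :=
    fun m => ⟨hpiece_ne m, hpiece_comp m, hpiece_perf m, hpiece_td m⟩
  -- membership in Tran and Rec
  have horbitTran : ∀ (α : ℕ → Bool) (m : ℕ), f^[m] (φ α) ∈ Tran f := by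
    intro α m
    show Dense (Set.range fun k : ℕ => f^[k] (f^[m] (φ α)))
    have hsub : (Set.range fun n : ℕ => f^[n] (φ α)) \
        ((fun n : ℕ => f^[n] (φ α)) '' {n | n < m}) ⊆
        Set.range fun k : ℕ => f^[k] (f^[m] (φ α)) := by
      rintro y ⟨⟨i, rfl⟩, hyF⟩
      have him : m ≤ i := by
        by_contra hlt
        exact hyF ⟨i, by simp only [Set.mem_setOf_eq]; omega, rfl⟩
      refine ⟨i - m, ?_⟩
      show f^[i - m] (f^[m] (φ α)) = f^[i] (φ α)
      rw [← Function.iterate_add_apply]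
      congr 1
      omega
    exact Dense.mono hsub (Dense.diff_finite (hTran α) ((Set.finite_Iio m).image _))
  have htranrec : ∀ x : X, x ∈ Tran f → x ∈ Rec f := by
    intro x hx
    have hstepr : ∀ (m k : ℕ), ∃ n, m < n ∧ dist (f^[n] x) x < 1 / (k + 1) := by
      intro m k
      have hd : Dense ((Set.range fun n : ℕ => f^[n] x) \
          ((fun n : ℕ => f^[n] x) '' {n | n ≤ m})) :=
        Dense.diff_finite hx ((Set.finite_Iic m).image _)
      obtain ⟨y, hyb, hymem⟩ := Metric.dense_iff.1 hd x (1 / (k + 1)) (by positivity)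
      obtain ⟨⟨i, rfl⟩, hyF⟩ := hymem
      have him : m < i := by
        by_contra hle
        exact hyF ⟨i, by simp only [Set.mem_setOf_eq]; omega, rfl⟩
      exact ⟨i, him, Metric.mem_ball.1 hyb⟩
    choose nf hnf1 hnf2 using hstepr
    set ψ : ℕ → ℕ := fun k => Nat.rec (nf 0 0) (fun k ih => nf ih (k + 1)) k with hψdef
    have hψs : ∀ k, ψ (k + 1) = nf (ψ k) (k + 1) := fun k => rfl
    have hψmono : StrictMono ψ := strictMono_nat_of_lt_succ (fun k => by
      rw [hψs]; exact hnf1 _ _)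
    have hψdist : ∀ k, dist (f^[ψ k] x) x < 1 / (k + 1) := by
      intro k
      cases k with
      | zero => exact hnf2 0 0
      | succ k => rw [hψs]; exact hnf2 _ _
    refine ⟨ψ, hψmono, ?_⟩
    rw [Metric.tendsto_atTop]
    intro ε' hε'
    obtain ⟨Kn, hKn⟩ := exists_nat_ge (1 / ε')
    refine ⟨Kn, fun k hk => ?_⟩
    calc dist (f^[ψ k] x) x < 1 / (k + 1) := hψdist k
      _ ≤ ε' := by
        rw [div_le_iff₀ (by positivity)]
        have h1 : (1 : ℝ) / ε' ≤ Kn := hKn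
        have h2 : (Kn : ℝ) ≤ k := by exact_mod_cast hk
        rw [div_le_iff₀ hε'] at h1
        nlinarith
  -- the p-limb Cantor set
  have hρpos : ∀ m : ℕ, 0 < Metric.infDist p (f^[m] '' C) := by
    intro m
    obtain ⟨z, hz, heq⟩ := (hpiece_comp m).exists_infDist_eq_dist (hpiece_ne m) p
    rw [heq]
    rw [dist_pos]
    obtain ⟨z₀, ⟨α, rfl⟩, rfl⟩ := hz
    exact fun h => hnotp α m h.symm
  set step : (ℕ × {r : ℝ // 0 < r}) → (ℕ × {r : ℝ // 0 < r}) := fun pr =>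
    (Classical.choose (hpret (min (Metric.infDist p (f^[pr.1] '' C) / 2) (pr.2.1 / 2))
        (lt_min (half_pos (hρpos pr.1)) (half_pos pr.2.2)) (pr.1 + 1)),
      ⟨min (Metric.infDist p (f^[pr.1] '' C) / 2) (pr.2.1 / 2),
        lt_min (half_pos (hρpos pr.1)) (half_pos pr.2.2)⟩) with hstepdef
  set base : ℕ × {r : ℝ // 0 < r} :=
    (Classical.choose (hpret 1 one_pos 0), ⟨1, one_pos⟩) with hbasedef
  set seq : ℕ → ℕ × {r : ℝ // 0 < r} := fun j => Nat.rec base (fun _ pr => step pr) j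
    with hseqdef
  have hseqS : ∀ j, seq (j + 1) = step (seq j) := fun j => rfl
  set nj : ℕ → ℕ := fun j => (seq j).1 with hnjdef
  set dj : ℕ → ℝ := fun j => (seq j).2.1 with hdjdef
  have hdjpos : ∀ j, 0 < dj j := fun j => (seq j).2.2
  have hstep1 : ∀ pr : ℕ × {r : ℝ // 0 < r}, pr.1 + 1 ≤ (step pr).1 ∧
      (∀ α, dist (f^[(step pr).1] (φ α)) p ≤ (step pr).2.1) ∧
      (step pr).2.1 ≤ Metric.infDist p (f^[pr.1] '' C) / 2 ∧
      (step pr).2.1 ≤ pr.2.1 / 2 := by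
    intro pr
    have hsp := Classical.choose_spec (hpret
      (min (Metric.infDist p (f^[pr.1] '' C) / 2) (pr.2.1 / 2))
      (lt_min (half_pos (hρpos pr.1)) (half_pos pr.2.2)) (pr.1 + 1))
    exact ⟨hsp.1, hsp.2, min_le_left _ _, min_le_right _ _⟩
  have hbound : ∀ j, ∀ α, dist (f^[nj j] (φ α)) p ≤ dj j := by
    intro j
    cases j with
    | zero =>
        have hsp := Classical.choose_spec (hpret 1 one_pos 0)
        exact hsp.2
    | succ j =>
        exact (hstep1 (seq j)).2.1
  have hnmono : ∀ j, nj j < nj (j + 1) := by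
    intro j
    exact Nat.lt_of_lt_of_le (Nat.lt_succ_self _) (hstep1 (seq j)).1
  have hdnext : ∀ j, dj (j + 1) ≤ Metric.infDist p (f^[nj j] '' C) / 2 := by
    intro j
    exact (hstep1 (seq j)).2.2.1
  have hdhalf : ∀ j, dj (j + 1) ≤ dj j / 2 := by
    intro j
    exact (hstep1 (seq j)).2.2.2
  have hdanti : ∀ j j', j ≤ j' → dj j' ≤ dj j := by
    intro j j' h
    induction j' with
    | zero => have : j = 0 := by omega
              subst this; exact le_refl _
    | succ j' ih =>
        rcases Nat.lt_or_ge j (j' + 1) with h2 | h2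
        · have h3 := ih (by omega)
          have h4 := hdhalf j'
          have h5 := hdjpos j'
          linarith
        · have : j = j' + 1 := by omega
          subst this
          exact le_refl _
  have hdsmall : ∀ j : ℕ, dj j ≤ (1 / 2) ^ j := by
    intro j
    induction j with
    | zero =>
        have : dj 0 = 1 := rfl
        rw [this]; norm_num
    | succ j ih =>
        have h1 := hdhalf j
        have h2 : ((1:ℝ) / 2) ^ (j + 1) = (1 / 2) ^ j * (1 / 2) := pow_succ _ _
        rw [h2]
        linarith
  set Q : ℕ → Set X := fun j => f^[nj j] '' C with hQdef
  set ρQ : ℕ → ℝ := fun j => Metric.infDist p (Q j) with hρQdef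
  have hρQpos : ∀ j, 0 < ρQ j := fun j => hρpos (nj j)
  have hQball : ∀ j, ∀ z ∈ Q j, dist z p ≤ dj j := by
    rintro j z ⟨z₀, ⟨α, rfl⟩, rfl⟩
    exact hbound j α
  have hQfar : ∀ j, ∀ z ∈ Q j, ρQ j ≤ dist p z := by
    intro j z hz
    exact Metric.infDist_le_dist_of_mem hz
  have hdext : ∀ j, dj (j + 1) ≤ ρQ j / 2 := hdnext
  have hρanti : ∀ j, ρQ (j + 1) < ρQ j := by
    intro j
    obtain ⟨α⟩ : Nonempty (ℕ → Bool) := ⟨fun _ => false⟩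
    have hz : f^[nj (j + 1)] (φ α) ∈ Q (j + 1) := ⟨φ α, ⟨α, rfl⟩, rfl⟩
    have h1 := hQfar (j + 1) _ hz
    have h2 := hQball (j + 1) _ hz
    rw [dist_comm] at h2
    have h3 := hdext j
    have h4 := hρQpos j
    linarith
  have hρanti' : ∀ j j', j ≤ j' → ρQ j' ≤ ρQ j := by
    intro j j' h
    induction j' with
    | zero => have : j = 0 := by omega
              subst this; exact le_refl _
    | succ j' ih =>
        rcases Nat.lt_or_ge j (j' + 1) with h2 | h2
        · exact le_trans (hρanti j').le (ih (by omega))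
        · have : j = j' + 1 := by omega
          subst this; exact le_refl _
  set Cstar : Set X := {p} ∪ ⋃ j : ℕ, Q j with hCstardef
  have hCstar_mem : ∀ z ∈ Cstar, z = p ∨ ∃ j, z ∈ Q j := by
    intro z hz
    rcases hz with hz | hz
    · exact Or.inl hz
    · exact Or.inr (Set.mem_iUnion.1 hz)
  have hCstar_closed : IsClosed Cstar := by
    rw [← closure_subset_iff_isClosed]
    intro x hx
    by_cases hxp : x = p
    · exact Or.inl (by rw [hxp]; rfl)
    · have hdx : 0 < dist x p := dist_pos.2 hxp
      obtain ⟨J, hJ⟩ : ∃ J : ℕ, dj J < dist x p / 2 := by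
        obtain ⟨n, hn⟩ := exists_pow_lt_of_lt_one (show (0:ℝ) < dist x p / 2 by positivity)
          (by norm_num : (1:ℝ) / 2 < 1)
        exact ⟨n, lt_of_le_of_lt (hdsmall n) hn⟩
      have hsplit : Cstar ⊆ ((({p} : Set X) ∪ ⋃ j ∈ Finset.range J, Q j) ∪
          Metric.closedBall p (dist x p / 2)) := by
        intro z hz
        rcases hCstar_mem z hz with rfl | ⟨j, hj⟩
        · exact Or.inl (Or.inl rfl)
        · rcases Nat.lt_or_ge j J with h | h
          · exact Or.inl (Or.inr (Set.mem_biUnion (Finset.mem_range.2 h) hj))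
          · refine Or.inr ?_
            rw [Metric.mem_closedBall]
            have := hQball j z hj
            have h2 := hdanti J j h
            linarith
      have hclosed2 : IsClosed ((({p} : Set X) ∪ ⋃ j ∈ Finset.range J, Q j) ∪
          Metric.closedBall p (dist x p / 2)) := by
        apply IsClosed.union
        · apply IsClosed.union isClosed_singleton
          exact isClosed_biUnion_finset (fun j _ => (hpiece_comp (nj j)).isClosed)
        · exact Metric.isClosed_closedBall
      have hx2 := (closure_minimal hsplit hclosed2) hx
      rcases hx2 with hx2 | hx2
      · rcases hx2 with hx2 | hx2
        · exact absurd hx2 hxp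
        · obtain ⟨j, _, hj⟩ := Set.mem_iUnion₂.1 hx2
          exact Or.inr (Set.mem_iUnion.2 ⟨j, hj⟩)
      · rw [Metric.mem_closedBall] at hx2
        linarith
  have hCstar_compact : IsCompact Cstar := hCstar_closed.isCompact
  have hCstar_ne : Cstar.Nonempty := ⟨p, Or.inl rfl⟩
  have hCstar_perf : Perfect Cstar := by
    constructor
    · exact hCstar_closed
    · intro x hx
      rcases hCstar_mem x hx with rfl | ⟨j, hj⟩
      · rw [accPt_iff_nhds]
        intro U hU
        obtain ⟨r, hr, hball⟩ := Metric.mem_nhds_iff.1 hU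
        obtain ⟨J, hJ⟩ : ∃ J : ℕ, dj J < r := by
          obtain ⟨n, hn⟩ := exists_pow_lt_of_lt_one hr (by norm_num : (1:ℝ) / 2 < 1)
          exact ⟨n, lt_of_le_of_lt (hdsmall n) hn⟩
        set α₀ : ℕ → Bool := fun _ => false
        refine ⟨f^[nj J] (φ α₀), ⟨?_, ?_⟩, ?_⟩
        · apply hball
          rw [Metric.mem_ball]
          exact lt_of_le_of_lt (hbound J α₀) hJ
        · exact Or.inr (Set.mem_iUnion.2 ⟨J, ⟨φ α₀, ⟨α₀, rfl⟩, rfl⟩⟩)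
        · exact fun h => hnotp α₀ (nj J) h
      · rw [accPt_iff_nhds]
        intro U hU
        have hacc := (hpiece_perf (nj j)).acc x hj
        rw [accPt_iff_nhds] at hacc
        obtain ⟨y, ⟨hyU, hyQ⟩, hyne⟩ := hacc U hU
        exact ⟨y, ⟨hyU, Or.inr (Set.mem_iUnion.2 ⟨j, hyQ⟩)⟩, hyne⟩
  have hCstar_td : IsTotallyDisconnected Cstar := by
    intro t hts hpc x hx y hy
    by_contra hxy
    have hsplitp : ∀ (j : ℕ) (u v : X), u ∈ t → v ∈ t → u ∈ Q j →
        (v = p ∨ ∃ j', j < j' ∧ v ∈ Q j') → False := by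
      intro j u v hu hv huQ hvcase
      set mid := (dj (j + 1) + ρQ j) / 2 with hmiddef
      have hm1 : dj (j + 1) < mid := by
        have h1 := hdext j
        have h2 := hρQpos j
        rw [hmiddef]
        linarith
      have hm2 : mid < ρQ j := by
        have h1 := hdext j
        have h2 := hρQpos j
        rw [hmiddef]
        linarith
      have hUopen : IsOpen {z : X | mid < dist p z} :=
        isOpen_lt continuous_const (continuous_const.dist continuous_id)
      have hVopen : IsOpen {z : X | dist p z < mid} :=
        isOpen_lt (continuous_const.dist continuous_id) continuous_const
      have hcover : t ⊆ {z : X | mid < dist p z} ∪ {z : X | dist p z < mid} := by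
        intro z hz
        rcases hCstar_mem z (hts hz) with rfl | ⟨j'', hj''⟩
        · right
          simp only [Set.mem_setOf_eq, dist_self]
          have h1 := hρQpos j
          have h2 := hdjpos (j + 1)
          linarith
        · rcases Nat.lt_or_ge j j'' with h | h
          · right
            have h1 := hQball j'' z hj''
            have h2 := hdanti (j + 1) j'' (by omega)
            rw [Set.mem_setOf_eq, dist_comm]
            linarith
          · left
            have h1 := hQfar j'' z hj''
            have h2 := hρanti' j'' j h
            rw [Set.mem_setOf_eq]
            linarith
      have hune : u ∈ {z : X | mid < dist p z} := by
        have := hQfar j u huQ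
        rw [Set.mem_setOf_eq]
        linarith
      have hvne : v ∈ {z : X | dist p z < mid} := by
        rcases hvcase with rfl | ⟨j', hj', hvQ⟩
        · simp only [Set.mem_setOf_eq, dist_self]
          have h1 := hρQpos j
          have h2 := hdjpos (j + 1)
          linarith
        · have h1 := hQball j' v hvQ
          have h2 := hdanti (j + 1) j' (by omega)
          rw [Set.mem_setOf_eq, dist_comm]
          linarith
      obtain ⟨z, hzt, hz1, hz2⟩ := hpc _ _ hUopen hVopen hcover ⟨u, hu, hune⟩ ⟨v, hv, hvne⟩
      rw [Set.mem_setOf_eq] at hz1 hz2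
      linarith
    rcases hCstar_mem x (hts hx) with rfl | ⟨jx, hjx⟩
    · rcases hCstar_mem y (hts hy) with rfl | ⟨jy, hjy⟩
      · exact hxy rfl
      · exact hsplitp jy y x hy hx hjy (Or.inl rfl)
    · rcases hCstar_mem y (hts hy) with rfl | ⟨jy, hjy⟩
      · exact hsplitp jx x y hx hy hjx (Or.inl rfl)
      · rcases Nat.lt_trichotomy jx jy with h | h | h
        · exact hsplitp jx x y hx hy hjx (Or.inr ⟨jy, h, hjy⟩)
        · subst h
          by_cases hsub : t ⊆ Q jx
          · exact hxy ((hpiece_td (nj jx)) t hsub hpc hx hy)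
          · obtain ⟨z, hzt, hzQ⟩ := Set.not_subset.1 hsub
            rcases hCstar_mem z (hts hzt) with rfl | ⟨jz, hjz⟩
            · exact hsplitp jx x z hx hzt hjx (Or.inl rfl)
            · have hne : jz ≠ jx := fun h => hzQ (h ▸ hjz)
              rcases Nat.lt_or_ge jz jx with h2 | h2
              · exact hsplitp jz z x hzt hx hjz (Or.inr ⟨jx, h2, hjx⟩)
              · exact hsplitp jx x z hx hzt hjx (Or.inr ⟨jz, by omega, hjz⟩)
        · exact hsplitp jy y x hy hx hjy (Or.inr ⟨jx, h, hjx⟩)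
  have hCstarCantor : IsCantorSet Cstar :=
    ⟨hCstar_ne, hCstar_compact, hCstar_perf, hCstar_td⟩
  -- assemble D
  set D : Set X := {p} ∪ ⋃ m : ℕ, f^[m] '' C with hDdef
  have hDmem : ∀ z ∈ D, z = p ∨ ∃ (m : ℕ) (α : ℕ → Bool), z = f^[m] (φ α) := by
    intro z hz
    rcases hz with hz | hz
    · exact Or.inl hz
    · obtain ⟨m, hm⟩ := Set.mem_iUnion.1 hz
      obtain ⟨z₀, ⟨α, rfl⟩, rfl⟩ := hm
      exact Or.inr ⟨m, α, rfl⟩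
  have hDmem' : ∀ (m : ℕ) (α : ℕ → Bool), f^[m] (φ α) ∈ D :=
    fun m α => Or.inr (Set.mem_iUnion.2 ⟨m, ⟨φ α, ⟨α, rfl⟩, rfl⟩⟩)
  refine ⟨ε, hε, D, ?_, ?_, ?_, ?_, Or.inl rfl, ?_⟩
  · -- Mycielski
    refine ⟨fun k => if k = 0 then Cstar else f^[k - 1] '' C, fun k => ?_, ?_⟩
    · by_cases hk : k = 0
      · simpa [hk] using hCstarCantor
      · simpa [hk] using hpieceCantor (k - 1)
    · apply Set.eq_of_subset_of_subset
      · intro z hz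
        rcases hDmem z hz with rfl | ⟨m, α, rfl⟩
        · exact Set.mem_iUnion.2 ⟨0, by rw [if_pos rfl]; exact Or.inl rfl⟩
        · exact Set.mem_iUnion.2 ⟨m + 1, by
            rw [if_neg (Nat.succ_ne_zero m)]
            exact ⟨φ α, ⟨α, rfl⟩, by simp⟩⟩
      · intro z hz
        obtain ⟨k, hk⟩ := Set.mem_iUnion.1 hz
        by_cases hk0 : k = 0
        · rw [if_pos hk0] at hk
          rcases hCstar_mem z hk with rfl | ⟨j, hj⟩
          · exact Or.inl rfl
          · exact Or.inr (Set.mem_iUnion.2 ⟨nj j, hj⟩)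
        · rw [if_neg hk0] at hk
          exact Or.inr (Set.mem_iUnion.2 ⟨k - 1, hk⟩)
  · -- Dense
    apply Dense.mono ?_ (hTran (fun _ => false))
    intro z hz
    obtain ⟨n, rfl⟩ := hz
    exact hDmem' n _
  · -- DistScrambled
    intro x hx y hy hxy
    rcases hDmem x hx with rfl | ⟨a, α, rfl⟩
    · rcases hDmem y hy with rfl | ⟨b, β, rfl⟩
      · exact absurd rfl hxy
      · exact hppair β b
    · rcases hDmem y hy with rfl | ⟨b, β, rfl⟩
      · constructor
        · intro t ht
          rw [SpecWork.phiUp_symm]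
          exact (hppair α a).1 t ht
        · rw [SpecWork.phiLow_symm]
          exact (hppair α a).2
      · apply hpair
        by_cases hab : α = β
        · subst hab
          right
          intro h
          exact hxy (by rw [h])
        · exact Or.inl hab
  · -- invariance
    rintro _ ⟨x, hx, rfl⟩
    rcases hDmem x hx with rfl | ⟨m, α, rfl⟩
    · rw [hp]; exact Or.inl rfl
    · rw [← Function.iterate_succ_apply' f m (φ α)]
      exact hDmem' (m + 1) α
  · -- inclusion in (Tran ∩ Rec) ∪ {p}
    intro z hz
    rcases hDmem z hz with rfl | ⟨m, α, rfl⟩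
    · exact Or.inr rfl
    · exact Or.inl ⟨horbitTran α m, htranrec _ (horbitTran α m)⟩
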